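/- arXiv:math/9809047 — 2 statements merged into one kernel-verified Lean document; each statement's English description precedes it below -/
import Mathlib

section
/- (Symmetrizer recursion, the symmetric analogue of the antisymmetrizer recursion.) For every integer k ≥ 1 the q-symmetrizers satisfy q^{−k} S^{(k)} = (k+1)_q S^{(k+1)} − k_q S^{(k)} R̂_k S^{(k)}, as operators on V^{⊗(k+1)} (with S^{(k)} acting in the first k factors). -/
open Finset

/-- Operators on `V^{⊗ m}` where `V = F^N`, represented as matrices indexed by
multi-indices `Fin m → Fin N`. -/
abbrev TensM (R : Type*) (N m : ℕ) := Matrix (Fin m → Fin N) (Fin m → Fin N) R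

/-- Operators on `V ⊗ V`, i.e. `N² × N²` matrices. -/
abbrev RMat (R : Type*) (N : ℕ) := Matrix (Fin N × Fin N) (Fin N × Fin N) R

/-- The `q`-number `k_q = (q^k - q^{-k})/(q - q^{-1})`. -/
noncomputable def qnum {F : Type*} [Field F] (q : F) (k : ℕ) : F :=
  (q ^ k - q⁻¹ ^ k) / (q - q⁻¹)

/-- Place an `N × N` matrix on the tensor leg number `i` (0-based) of `V^{⊗ m}`,
acting as the identity on all other legs. -/
def place1 {R : Type*} [Zero R] {N m : ℕ} (i : ℕ) (M : Matrix (Fin N) (Fin N) R) :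
    TensM R N m :=
  Matrix.of fun a b =>
    if h : i < m then
      if ∀ t : Fin m, t.val ≠ i → a t = b t then M (a ⟨i, h⟩) (b ⟨i, h⟩) else 0
    else 0

/-- Place an operator on `V ⊗ V` on the (0-based) tensor legs `i, i+1` of `V^{⊗ m}`,
acting as the identity on all other legs.  (So the paper's `R̂_i`, `1`-based, is
`place2 (i-1)`.) -/
def place2 {R : Type*} [Zero R] {N m : ℕ} (i : ℕ) (M : RMat R N) :
    TensM R N m :=
  Matrix.of fun a b =>
    if h : i + 1 < m then
      if ∀ t : Fin m, t.val ≠ i → t.val ≠ i + 1 → a t = b t then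
        M (a ⟨i, by omega⟩, a ⟨i + 1, h⟩) (b ⟨i, by omega⟩, b ⟨i + 1, h⟩)
      else 0
    else 0

/-- Embed an operator on `V^{⊗ k}` into `V^{⊗ m}` (`k ≤ m`), acting on the first `k`
tensor legs and as the identity on the remaining legs. -/
def embed {R : Type*} [Zero R] {N : ℕ} (m : ℕ) {k : ℕ} (M : TensM R N k) :
    TensM R N m :=
  Matrix.of fun a b =>
    if h : k ≤ m then
      if ∀ t : Fin m, k ≤ t.val → a t = b t then
        M (fun s => a ⟨s.val, lt_of_lt_of_le s.isLt h⟩)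
          (fun s => b ⟨s.val, lt_of_lt_of_le s.isLt h⟩)
      else 0
    else 0

/-- The braid form of the Yang--Baxter equation `R̂₁ R̂₂ R̂₁ = R̂₂ R̂₁ R̂₂` on `V^{⊗3}`. -/
def YangBaxter {F : Type*} [Field F] {N : ℕ} (Rh : RMat F N) : Prop :=
  (place2 0 Rh : TensM F N 3) * place2 1 Rh * place2 0 Rh =
    place2 1 Rh * place2 0 Rh * place2 1 Rh

/-- The Hecke condition `R̂² = I + (q - q⁻¹) R̂`. -/
def Hecke {F : Type*} [Field F] {N : ℕ} (q : F) (Rh : RMat F N) : Prop :=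
  Rh * Rh = 1 + (q - q⁻¹) • Rh

/-- The `q`-antisymmetrizers `A^{(k)}`, defined inductively by `A^{(1)} = I` and
`A^{(k)} = (1/k_q) A^{(k-1)} (q^{k-1} - (k-1)_q R̂_{k-1}) A^{(k-1)}`. -/
noncomputable def antis {F : Type*} [Field F] {N : ℕ} (Rh : RMat F N) (q : F) :
    (k : ℕ) → TensM F N k
  | 0 => 1
  | 1 => 1
  | k + 2 =>
      (qnum q (k + 2))⁻¹ •
        (embed (k + 2) (antis Rh q (k + 1)) *
          (q ^ (k + 1) • (1 : TensM F N (k + 2)) - qnum q (k + 1) • place2 k Rh) *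
          embed (k + 2) (antis Rh q (k + 1)))

/-- The `q`-symmetrizers `S^{(k)}`, defined inductively by `S^{(1)} = I` and
`S^{(k)} = (1/k_q) S^{(k-1)} (q^{1-k} + (k-1)_q R̂_{k-1}) S^{(k-1)}`. -/
noncomputable def syms {F : Type*} [Field F] {N : ℕ} (Rh : RMat F N) (q : F) :
    (k : ℕ) → TensM F N k
  | 0 => 1
  | 1 => 1
  | k + 2 =>
      (qnum q (k + 2))⁻¹ •
        (embed (k + 2) (syms Rh q (k + 1)) *
          (q⁻¹ ^ (k + 1) • (1 : TensM F N (k + 2)) + qnum q (k + 1) • place2 k Rh) *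
          embed (k + 2) (syms Rh q (k + 1)))

/-- Partial trace over all tensor legs except the last one. -/
def trAllButLast {R : Type*} [AddCommMonoid R] {N : ℕ} :
    {m : ℕ} → TensM R N m → Matrix (Fin N) (Fin N) R
  | 0, _ => 0
  | m + 1, M => Matrix.of fun x y => ∑ a : Fin m → Fin N, M (Fin.snoc a x) (Fin.snoc a y)

/-- Partial trace over all tensor legs except the first one. -/
def trAllButFirst {R : Type*} [AddCommMonoid R] {N : ℕ} :
    {m : ℕ} → TensM R N m → Matrix (Fin N) (Fin N) R
  | 0, _ => 0
  | m + 1, M => Matrix.of fun x y => ∑ a : Fin m → Fin N, M (Fin.cons x a) (Fin.cons y a)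

/-- Extension of scalars `F → 𝒜` applied entrywise (scalar entries are central in `𝒜`). -/
def lift {F : Type*} [Field F] (𝒜 : Type*) [Ring 𝒜] [Algebra F 𝒜] {N m : ℕ}
    (M : TensM F N m) : TensM 𝒜 N m := M.map (algebraMap F 𝒜)

/-- The product `R̂_{i+1} R̂_{i+2} ⋯ R̂_{i+l}` (1-based paper numbering), i.e. the product of
copies of `R̂` placed at 0-based positions `i, i+1, …, i+l-1` of `V^{⊗ m}`. -/
noncomputable def rChainFrom {F : Type*} [Field F] {N : ℕ} (m : ℕ) (Rh : RMat F N)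
    (i : ℕ) : ℕ → TensM F N m
  | 0 => 1
  | l + 1 => rChainFrom m Rh i l * place2 (i + l) Rh

/-- The product `R̂₁ R̂₂ ⋯ R̂_l` (1-based paper numbering) on `V^{⊗ m}`. -/
noncomputable def rChain {F : Type*} [Field F] {N : ℕ} (m : ℕ) (Rh : RMat F N)
    (l : ℕ) : TensM F N m := rChainFrom m Rh 0 l

/-- The product `T₁ T₂ ⋯ T_k` of copies of the quantum matrix `T` on `V^{⊗ m}`. -/
def Tprod {𝒜 : Type*} [Ring 𝒜] {N : ℕ} (m : ℕ) (T : Matrix (Fin N) (Fin N) 𝒜) :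
    ℕ → TensM 𝒜 N m
  | 0 => 1
  | k + 1 => Tprod m T k * place1 k T

/-- The matrix `T₁T₂` on `V ⊗ V`, `(T₁T₂)^{ij}_{kl} = T^i_k T^j_l`. -/
def TT {𝒜 : Type*} [Mul 𝒜] {N : ℕ} (T : Matrix (Fin N) (Fin N) 𝒜) : RMat 𝒜 N :=
  Matrix.of fun p r => T p.1 r.1 * T p.2 r.2

/-- The RTT relation `R̂ T₁T₂ = T₁T₂ R̂` (entries of `R̂` are central scalars). -/
def RTTrel {F : Type*} [Field F] {N : ℕ} (𝒜 : Type*) [Ring 𝒜] [Algebra F 𝒜]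
    (Rh : RMat F N) (T : Matrix (Fin N) (Fin N) 𝒜) : Prop :=
  Rh.map (algebraMap F 𝒜) * TT T = TT T * Rh.map (algebraMap F 𝒜)

/-- The `k`-th underlined power `T^{⟨k⟩} = Tr_{(1…k-1)} (R̂₁ ⋯ R̂_{k-1} T₁ ⋯ T_k)`. -/
noncomputable def underPow {F : Type*} [Field F] (𝒜 : Type*) [Ring 𝒜] [Algebra F 𝒜]
    {N : ℕ} (Rh : RMat F N) (T : Matrix (Fin N) (Fin N) 𝒜) :
    ℕ → Matrix (Fin N) (Fin N) 𝒜
  | 0 => 1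
  | k + 1 => trAllButLast (lift 𝒜 (rChain (k + 1) Rh k) * Tprod (k + 1) T (k + 1))

/-- The `k`-th overlined power `T^{[k]} = Tr_{(2…k)} (R̂₁ ⋯ R̂_{k-1} T₁ ⋯ T_k)`. -/
noncomputable def overPow {F : Type*} [Field F] (𝒜 : Type*) [Ring 𝒜] [Algebra F 𝒜]
    {N : ℕ} (Rh : RMat F N) (T : Matrix (Fin N) (Fin N) 𝒜) :
    ℕ → Matrix (Fin N) (Fin N) 𝒜
  | 0 => 1
  | k + 1 => trAllButFirst (lift 𝒜 (rChain (k + 1) Rh k) * Tprod (k + 1) T (k + 1))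

/-- The `k`-th right wedge power `T^{∧k,r} = Tr_{(1…k-1)} (A^{(k)} T₁ ⋯ T_k)`. -/
noncomputable def wedgeR {F : Type*} [Field F] (𝒜 : Type*) [Ring 𝒜] [Algebra F 𝒜]
    {N : ℕ} (Rh : RMat F N) (q : F) (T : Matrix (Fin N) (Fin N) 𝒜) :
    ℕ → Matrix (Fin N) (Fin N) 𝒜
  | 0 => 1
  | k + 1 => trAllButLast (lift 𝒜 (antis Rh q (k + 1)) * Tprod (k + 1) T (k + 1))

/-- The `k`-th left wedge power `T^{∧k,l} = Tr_{(2…k)} (A^{(k)} T₁ ⋯ T_k)`. -/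
noncomputable def wedgeL {F : Type*} [Field F] (𝒜 : Type*) [Ring 𝒜] [Algebra F 𝒜]
    {N : ℕ} (Rh : RMat F N) (q : F) (T : Matrix (Fin N) (Fin N) 𝒜) :
    ℕ → Matrix (Fin N) (Fin N) 𝒜
  | 0 => 1
  | k + 1 => trAllButFirst (lift 𝒜 (antis Rh q (k + 1)) * Tprod (k + 1) T (k + 1))

/-- The `k`-th right symmetric power `T^{Sk,r} = Tr_{(1…k-1)} (S^{(k)} T₁ ⋯ T_k)`. -/
noncomputable def sPowR {F : Type*} [Field F] (𝒜 : Type*) [Ring 𝒜] [Algebra F 𝒜]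
    {N : ℕ} (Rh : RMat F N) (q : F) (T : Matrix (Fin N) (Fin N) 𝒜) :
    ℕ → Matrix (Fin N) (Fin N) 𝒜
  | 0 => 1
  | k + 1 => trAllButLast (lift 𝒜 (syms Rh q (k + 1)) * Tprod (k + 1) T (k + 1))

/-- The `k`-th left symmetric power `T^{Sk,l} = Tr_{(2…k)} (S^{(k)} T₁ ⋯ T_k)`. -/
noncomputable def sPowL {F : Type*} [Field F] (𝒜 : Type*) [Ring 𝒜] [Algebra F 𝒜]
    {N : ℕ} (Rh : RMat F N) (q : F) (T : Matrix (Fin N) (Fin N) 𝒜) :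
    ℕ → Matrix (Fin N) (Fin N) 𝒜
  | 0 => 1
  | k + 1 => trAllButFirst (lift 𝒜 (syms Rh q (k + 1)) * Tprod (k + 1) T (k + 1))

/-- The elementary symmetric functions `σ_k(T) = q^k Tr_{(1…k)} (A^{(k)} T₁ ⋯ T_k)`
(with `σ₀(T) = 1`). -/
noncomputable def sigmaT {F : Type*} [Field F] (𝒜 : Type*) [Ring 𝒜] [Algebra F 𝒜]
    {N : ℕ} (Rh : RMat F N) (q : F) (T : Matrix (Fin N) (Fin N) 𝒜) (k : ℕ) : 𝒜 :=
  q ^ k • Matrix.trace (lift 𝒜 (antis Rh q k) * Tprod k T k)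

/-- The complete symmetric functions `τ_k(T) = q^{-k} Tr_{(1…k)} (S^{(k)} T₁ ⋯ T_k)`
(with `τ₀(T) = 1`). -/
noncomputable def tauT {F : Type*} [Field F] (𝒜 : Type*) [Ring 𝒜] [Algebra F 𝒜]
    {N : ℕ} (Rh : RMat F N) (q : F) (T : Matrix (Fin N) (Fin N) 𝒜) (k : ℕ) : 𝒜 :=
  q⁻¹ ^ k • Matrix.trace (lift 𝒜 (syms Rh q k) * Tprod k T k)

/-- The `q`-power sums `s_k(T) = Tr_{(1…k)} (R̂₁ ⋯ R̂_{k-1} T₁ ⋯ T_k)` (with `s₀(T) = 1`). -/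
noncomputable def psum {F : Type*} [Field F] (𝒜 : Type*) [Ring 𝒜] [Algebra F 𝒜]
    {N : ℕ} (Rh : RMat F N) (T : Matrix (Fin N) (Fin N) 𝒜) (k : ℕ) : 𝒜 :=
  Matrix.trace (lift 𝒜 (rChain k Rh (k - 1)) * Tprod k T k)

/-- `D_ℓ = (n_q / q^n) Tr_{(1…n-1)} A^{(n)}`. -/
noncomputable def Dleft {F : Type*} [Field F] {N : ℕ} (Rh : RMat F N) (q : F) (n : ℕ) :
    Matrix (Fin N) (Fin N) F :=
  (qnum q n / q ^ n) • trAllButLast (antis Rh q n)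

/-- `D_r = (n_q / q^n) Tr_{(2…n)} A^{(n)}`. -/
noncomputable def Dright {F : Type*} [Field F] {N : ℕ} (Rh : RMat F N) (q : F) (n : ℕ) :
    Matrix (Fin N) (Fin N) F :=
  (qnum q n / q ^ n) • trAllButFirst (antis Rh q n)

/-- The Reflection equation `R̂ L₁ R̂ L₁ = L₁ R̂ L₁ R̂` on `V ⊗ V`. -/
def RErel {F : Type*} [Field F] {N : ℕ} (𝒜 : Type*) [Ring 𝒜] [Algebra F 𝒜]
    (Rh : RMat F N) (L : Matrix (Fin N) (Fin N) 𝒜) : Prop :=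
  lift 𝒜 (place2 0 Rh : TensM F N 2) * place1 0 L * lift 𝒜 (place2 0 Rh) * place1 0 L =
    place1 0 L * lift 𝒜 (place2 0 Rh) * place1 0 L * lift 𝒜 (place2 0 Rh)

/-- `L_{k̄}` (0-based: `Lbar … 0 = L₁`, `Lbar … k = R̂_k (Lbar … (k-1)) R̂_k⁻¹`). -/
noncomputable def Lbar {F : Type*} [Field F] (𝒜 : Type*) [Ring 𝒜] [Algebra F 𝒜]
    {N : ℕ} (Rh : RMat F N) (m : ℕ) (L : Matrix (Fin N) (Fin N) 𝒜) :
    ℕ → TensM 𝒜 N m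
  | 0 => place1 0 L
  | k + 1 => lift 𝒜 (place2 k Rh) * Lbar 𝒜 Rh m L k * lift 𝒜 (place2 k Rh⁻¹)

/-- The product `L_{1̄} L_{2̄} ⋯ L_{k̄}` on `V^{⊗ m}`. -/
noncomputable def LbarProd {F : Type*} [Field F] (𝒜 : Type*) [Ring 𝒜] [Algebra F 𝒜]
    {N : ℕ} (Rh : RMat F N) (m : ℕ) (L : Matrix (Fin N) (Fin N) 𝒜) :
    ℕ → TensM 𝒜 N m
  | 0 => 1
  | k + 1 => LbarProd 𝒜 Rh m L k * Lbar 𝒜 Rh m L k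

/-- Insertion of a copy of `D` on every tensor leg of `V^{⊗(m+1)}` except the first one. -/
def Dbig {F : Type*} [Field F] {N : ℕ} (D : Matrix (Fin N) (Fin N) F) (m : ℕ) :
    TensM F N (m + 1) :=
  Matrix.of fun a b =>
    (if a 0 = b 0 then (1 : F) else 0) * ∏ t : Fin m, D (a t.succ) (b t.succ)

/-- `L^{∧k} = Tr_{q (2…k)} (A^{(k)} L_{1̄} ⋯ L_{k̄})`, the `q`-trace over the legs `2…k`,
with a copy of `D` inserted in each traced leg. -/
noncomputable def LwedgeRE {F : Type*} [Field F] (𝒜 : Type*) [Ring 𝒜] [Algebra F 𝒜]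
    {N : ℕ} (Rh : RMat F N) (q : F) (D : Matrix (Fin N) (Fin N) F)
    (L : Matrix (Fin N) (Fin N) 𝒜) : ℕ → Matrix (Fin N) (Fin N) 𝒜
  | 0 => 1
  | k + 1 => trAllButFirst
      (lift 𝒜 (antis Rh q (k + 1)) * LbarProd 𝒜 Rh (k + 1) L (k + 1) * lift 𝒜 (Dbig D k))

/-- `L^{Sk} = Tr_{q (2…k)} (S^{(k)} L_{1̄} ⋯ L_{k̄})`. -/
noncomputable def LsymRE {F : Type*} [Field F] (𝒜 : Type*) [Ring 𝒜] [Algebra F 𝒜]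
    {N : ℕ} (Rh : RMat F N) (q : F) (D : Matrix (Fin N) (Fin N) F)
    (L : Matrix (Fin N) (Fin N) 𝒜) : ℕ → Matrix (Fin N) (Fin N) 𝒜
  | 0 => 1
  | k + 1 => trAllButFirst
      (lift 𝒜 (syms Rh q (k + 1)) * LbarProd 𝒜 Rh (k + 1) L (k + 1) * lift 𝒜 (Dbig D k))

/-- `σ_k(L) = q^k Tr_q (L^{∧k})`, with `σ₀(L) = 1`;  `Tr_q X = Tr (D_r X)`. -/
noncomputable def sigmaRE {F : Type*} [Field F] (𝒜 : Type*) [Ring 𝒜] [Algebra F 𝒜]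
    {N : ℕ} (Rh : RMat F N) (q : F) (D : Matrix (Fin N) (Fin N) F)
    (L : Matrix (Fin N) (Fin N) 𝒜) : ℕ → 𝒜
  | 0 => 1
  | k + 1 => q ^ (k + 1) •
      Matrix.trace (D.map (algebraMap F 𝒜) * LwedgeRE 𝒜 Rh q D L (k + 1))

/-- `τ_k(L) = q^{-k} Tr_q (L^{Sk})`, with `τ₀(L) = 1`. -/
noncomputable def tauRE {F : Type*} [Field F] (𝒜 : Type*) [Ring 𝒜] [Algebra F 𝒜]
    {N : ℕ} (Rh : RMat F N) (q : F) (D : Matrix (Fin N) (Fin N) F)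
    (L : Matrix (Fin N) (Fin N) 𝒜) : ℕ → 𝒜
  | 0 => 1
  | k + 1 => q⁻¹ ^ (k + 1) •
      Matrix.trace (D.map (algebraMap F 𝒜) * LsymRE 𝒜 Rh q D L (k + 1))

section PlaceAt

variable {F : Type*} [Field F] {N : ℕ}

/-- Place an operator on `V^{⊗ r}` on legs `i, …, i+r-1` of `V^{⊗ m}`. -/
def placeAt (m i : ℕ) {r : ℕ} (M : TensM F N r) : TensM F N m :=
  Matrix.of fun a b =>
    if h : i + r ≤ m then
      if ∀ t : Fin m, (t.val < i ∨ i + r ≤ t.val) → a t = b t then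
        M (fun s => a ⟨i + s.val, by omega⟩) (fun s => b ⟨i + s.val, by omega⟩)
      else 0
    else 0

lemma placeAt_apply (m i : ℕ) {r : ℕ} (M : TensM F N r) (h : i + r ≤ m)
    (a b : Fin m → Fin N) :
    placeAt m i M a b =
      if ∀ t : Fin m, (t.val < i ∨ i + r ≤ t.val) → a t = b t then
        M (fun s => a ⟨i + s.val, by omega⟩) (fun s => b ⟨i + s.val, by omega⟩)
      else 0 := by
  simp [placeAt, h]

lemma placeAt_add (m i : ℕ) {r : ℕ} (A B : TensM F N r) :
    placeAt m i (A + B) = placeAt m i A + placeAt m i B := by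
  ext a b
  simp only [placeAt, Matrix.of_apply, Matrix.add_apply]
  split_ifs <;> simp

lemma placeAt_smul (m i : ℕ) {r : ℕ} (c : F) (A : TensM F N r) :
    placeAt m i (c • A) = c • placeAt m i A := by
  ext a b
  simp only [placeAt, Matrix.of_apply, Matrix.smul_apply]
  split_ifs <;> simp

lemma placeAt_one (m i : ℕ) {r : ℕ} (h : i + r ≤ m) :
    placeAt m i (1 : TensM F N r) = 1 := by
  ext a b
  rw [placeAt_apply m i _ h]
  by_cases hc : ∀ t : Fin m, (t.val < i ∨ i + r ≤ t.val) → a t = b t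
  · rw [if_pos hc, Matrix.one_apply, Matrix.one_apply]
    by_cases hab : a = b
    · subst hab; rw [if_pos rfl, if_pos rfl]
    · rw [if_neg hab, if_neg]
      intro hblk
      apply hab
      funext t
      by_cases ht : t.val < i ∨ i + r ≤ t.val
      · exact hc t ht
      · have h1 : i ≤ t.val := by omega
        have h2 : t.val < i + r := by omega
        have := congrFun hblk ⟨t.val - i, by omega⟩
        simpa only [show i + (t.val - i) = t.val by omega, Fin.eta] using this
  · rw [if_neg hc, Matrix.one_apply, if_neg]
    intro hab; subst hab; exact hc fun t _ => rfl

lemma placeAt_mul (m i : ℕ) {r : ℕ} (h : i + r ≤ m) (A B : TensM F N r) :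
    placeAt m i A * placeAt m i B = placeAt m i (A * B) := by
  ext a b
  rw [Matrix.mul_apply, placeAt_apply m i _ h]
  by_cases hab : ∀ t : Fin m, (t.val < i ∨ i + r ≤ t.val) → a t = b t
  · rw [if_pos hab, Matrix.mul_apply]
    rw [show (univ : Finset (Fin m → Fin N)) =
      univ.filter (fun c => ∀ t : Fin m, (t.val < i ∨ i + r ≤ t.val) → a t = c t) ∪
      univ.filter (fun c => ¬ ∀ t : Fin m, (t.val < i ∨ i + r ≤ t.val) → a t = c t) by
        rw [Finset.filter_union_filter_not_eq]]
    rw [Finset.sum_union (Finset.disjoint_filter_filter_not _ _ _)]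
    have hz : ∑ c ∈ univ.filter
        (fun c => ¬ ∀ t : Fin m, (t.val < i ∨ i + r ≤ t.val) → a t = c t),
        placeAt m i A a c * placeAt m i B c b = 0 := by
      apply Finset.sum_eq_zero
      intro c hc
      rw [Finset.mem_filter] at hc
      rw [placeAt_apply m i _ h, if_neg hc.2, zero_mul]
    rw [hz, add_zero]
    refine Finset.sum_nbij' (fun c => fun s : Fin r => c ⟨i + s.val, by omega⟩)
      (fun g => fun t : Fin m =>
        if ht : i ≤ t.val ∧ t.val < i + r then g ⟨t.val - i, by omega⟩ else a t)
      (fun c hc => Finset.mem_univ _) ?_ ?_ ?_ ?_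
    · intro g hg
      rw [Finset.mem_filter]
      refine ⟨Finset.mem_univ _, fun t ht => ?_⟩
      simp only []
      rw [dif_neg (by omega : ¬(i ≤ t.val ∧ t.val < i + r))]
    · intro c hc
      rw [Finset.mem_filter] at hc
      funext t
      simp only []
      by_cases ht : i ≤ t.val ∧ t.val < i + r
      · rw [dif_pos ht]
        exact congrArg c (Fin.ext (by simp only [Fin.val_mk]; omega))
      · rw [dif_neg ht]
        exact hc.2 t (by omega)
    · intro g hg
      funext s
      simp only []
      rw [dif_pos (show i ≤ i + s.val ∧ i + s.val < i + r by omega)]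
      exact congrArg g (Fin.ext (by simp only [Fin.val_mk]; omega))
    · intro c hc
      rw [Finset.mem_filter] at hc
      have h2 : ∀ t : Fin m, (t.val < i ∨ i + r ≤ t.val) → c t = b t :=
        fun t ht => (hc.2 t ht).symm.trans (hab t ht)
      rw [placeAt_apply m i _ h, if_pos hc.2, placeAt_apply m i _ h, if_pos h2]
  · rw [if_neg hab]
    apply Finset.sum_eq_zero
    intro c _
    rw [placeAt_apply m i _ h, placeAt_apply m i _ h]
    by_cases h1 : ∀ t : Fin m, (t.val < i ∨ i + r ≤ t.val) → a t = c t
    · have h2 : ¬ ∀ t : Fin m, (t.val < i ∨ i + r ≤ t.val) → c t = b t :=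
        fun hh => hab fun t ht => (h1 t ht).trans (hh t ht)
      rw [if_pos h1, if_neg h2, mul_zero]
    · rw [if_neg h1, zero_mul]


lemma placeAt_mul_disjoint (m i j : ℕ) {r s : ℕ}
    (hdisj : ∀ t : ℕ, ¬(i ≤ t ∧ t < i + r ∧ j ≤ t ∧ t < j + s))
    (him : i + r ≤ m) (hjm : j + s ≤ m)
    (A : TensM F N r) (B : TensM F N s) :
    placeAt m i A * placeAt m j B = Matrix.of fun a b =>
      if (∀ t : Fin m, (t.val < i ∨ i + r ≤ t.val) → (t.val < j ∨ j + s ≤ t.val) → a t = b t)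
      then A (fun u => a ⟨i + u.val, by omega⟩) (fun u => b ⟨i + u.val, by omega⟩) *
           B (fun u => a ⟨j + u.val, by omega⟩) (fun u => b ⟨j + u.val, by omega⟩)
      else 0 := by
  ext a b
  rw [Matrix.mul_apply, Matrix.of_apply]
  classical
  set c0 : Fin m → Fin N := fun t => if i ≤ t.val ∧ t.val < i + r then b t else a t with hc0
  rw [Fintype.sum_eq_single c0]
  · have h1 : ∀ t : Fin m, (t.val < i ∨ i + r ≤ t.val) → a t = c0 t := by
      intro t ht
      simp only [hc0]
      rw [if_neg (by omega)]
    rw [placeAt_apply m i _ him, if_pos h1, placeAt_apply m j _ hjm]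
    have hbc : (fun u : Fin r => c0 ⟨i + u.val, by omega⟩) =
        (fun u : Fin r => b ⟨i + u.val, by omega⟩) := by
      funext u
      simp only [hc0]
      rw [if_pos (by constructor <;> [omega; omega])]
    have hac : (fun u : Fin s => c0 ⟨j + u.val, by omega⟩) =
        (fun u : Fin s => a ⟨j + u.val, by omega⟩) := by
      funext u
      simp only [hc0]
      rw [if_neg (by intro hh; exact hdisj (j + u.val) (by omega))]
    rw [hbc]
    have hcondiff : (∀ t : Fin m, (t.val < j ∨ j + s ≤ t.val) → c0 t = b t) ↔
        (∀ t : Fin m, (t.val < i ∨ i + r ≤ t.val) → (t.val < j ∨ j + s ≤ t.val) → a t = b t) := by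
      constructor
      · intro H t ht1 ht2
        have := H t ht2
        simp only [hc0] at this
        rwa [if_neg (by omega)] at this
      · intro H t ht
        simp only [hc0]
        by_cases hti : i ≤ t.val ∧ t.val < i + r
        · rw [if_pos hti]
        · rw [if_neg hti]
          exact H t (by omega) ht
    by_cases hC : ∀ t : Fin m, (t.val < i ∨ i + r ≤ t.val) → (t.val < j ∨ j + s ≤ t.val) → a t = b t
    · rw [if_pos hC, if_pos (hcondiff.mpr hC), hac]
    · rw [if_neg hC, if_neg (fun H => hC (hcondiff.mp H)), mul_zero]
  · intro c hcne
    rw [placeAt_apply m i _ him, placeAt_apply m j _ hjm]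
    by_cases h1 : ∀ t : Fin m, (t.val < i ∨ i + r ≤ t.val) → a t = c t
    · by_cases h2 : ∀ t : Fin m, (t.val < j ∨ j + s ≤ t.val) → c t = b t
      · exfalso
        apply hcne
        funext t
        simp only [hc0]
        by_cases hti : i ≤ t.val ∧ t.val < i + r
        · rw [if_pos hti]
          exact h2 t (by have := hdisj t.val; omega)
        · rw [if_neg hti]
          exact (h1 t (by omega)).symm
      · rw [if_neg h2, mul_zero]
    · rw [if_neg h1, zero_mul]

lemma placeAt_comm (m i j : ℕ) {r s : ℕ} (hij : i + r ≤ j) (hjm : j + s ≤ m)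
    (A : TensM F N r) (B : TensM F N s) :
    placeAt m i A * placeAt m j B = placeAt m j B * placeAt m i A := by
  rw [placeAt_mul_disjoint m i j (fun t => by omega) (by omega) hjm,
      placeAt_mul_disjoint m j i (fun t => by omega) hjm (by omega)]
  ext a b
  rw [Matrix.of_apply, Matrix.of_apply]
  by_cases hC : ∀ t : Fin m, (t.val < i ∨ i + r ≤ t.val) → (t.val < j ∨ j + s ≤ t.val) → a t = b t
  · rw [if_pos hC, if_pos (fun t h1 h2 => hC t h2 h1), mul_comm]
  · rw [if_neg hC, if_neg (fun H => hC (fun t h1 h2 => H t h2 h1))]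

lemma placeAt_placeAt (m i j : ℕ) {r r' : ℕ} (h1 : j + r' ≤ r) (h2 : i + r ≤ m)
    (M : TensM F N r') :
    placeAt m i (placeAt r j M) = placeAt m (i + j) M := by
  ext a b
  rw [placeAt_apply m i _ h2, placeAt_apply m (i+j) _ (by omega)]
  by_cases hD : ∀ t : Fin m, (t.val < i ∨ i + r ≤ t.val) → a t = b t
  · rw [if_pos hD, placeAt_apply r j _ h1]
    by_cases hE : ∀ u : Fin r, (u.val < j ∨ j + r' ≤ u.val) →
        a ⟨i + u.val, by omega⟩ = b ⟨i + u.val, by omega⟩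
    · rw [if_pos hE, if_pos]
      · refine congrArg₂ M ?_ ?_ <;> funext v
        · exact congrArg a (Fin.ext (by simp only [Fin.val_mk]; omega))
        · exact congrArg b (Fin.ext (by simp only [Fin.val_mk]; omega))
      · intro t ht
        by_cases hti : i ≤ t.val ∧ t.val < i + r
        · have := hE ⟨t.val - i, by omega⟩ (by simp only [Fin.val_mk]; omega)
          have he : (⟨i + (t.val - i), by omega⟩ : Fin m) = t := Fin.ext (by simp only [Fin.val_mk]; omega)
          rwa [he] at this
        · exact hD t (by omega)
    · rw [if_neg hE, if_neg]
      intro hF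
      apply hE
      intro u hu
      exact hF ⟨i + u.val, by omega⟩ (by simp only [Fin.val_mk]; omega)
  · rw [if_neg hD, if_neg]
    intro hF
    apply hD
    intro t ht
    exact hF t (by omega)

/-- An operator on `V ⊗ V` as an operator on `V^{⊗2}`. -/
def toT2 (M : RMat F N) : TensM F N 2 :=
  Matrix.of fun a b => M (a 0, a 1) (b 0, b 1)

lemma toT2_mul (A B : RMat F N) : toT2 A * toT2 B = toT2 (A * B) := by
  ext a b
  simp only [Matrix.mul_apply, toT2, Matrix.of_apply]
  exact Fintype.sum_equiv (piFinTwoEquiv fun _ => Fin N) _ _ (fun c => rfl)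

lemma toT2_one : toT2 (1 : RMat F N) = 1 := by
  ext a b
  simp only [toT2, Matrix.of_apply]
  rw [Matrix.one_apply, Matrix.one_apply]
  by_cases hab : a = b
  · rw [if_pos hab, if_pos (by rw [hab])]
  · rw [if_neg hab, if_neg]
    intro h
    apply hab
    funext t
    match t with
    | 0 => exact congrArg Prod.fst h
    | 1 => exact congrArg Prod.snd h

lemma toT2_add (A B : RMat F N) : toT2 (A + B) = toT2 A + toT2 B := by
  ext a b; simp [toT2]

lemma toT2_smul (c : F) (A : RMat F N) : toT2 (c • A) = c • toT2 A := by
  ext a b; simp [toT2]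

lemma place2_eq_placeAt (m i : ℕ) (M : RMat F N) :
    (place2 i M : TensM F N m) = placeAt m i (toT2 M) := by
  ext a b
  simp only [place2, placeAt, toT2, Matrix.of_apply]
  by_cases h : i + 1 < m
  · rw [dif_pos h, dif_pos (by omega : i + 2 ≤ m)]
    have hcond : (∀ t : Fin m, t.val ≠ i → t.val ≠ i + 1 → a t = b t) ↔
        (∀ t : Fin m, (t.val < i ∨ i + 2 ≤ t.val) → a t = b t) :=
      ⟨fun H t ht => H t (by omega) (by omega), fun H t h1 h2 => H t (by omega)⟩
    by_cases hc : ∀ t : Fin m, t.val ≠ i → t.val ≠ i + 1 → a t = b t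
    · rw [if_pos hc, if_pos (hcond.mp hc)]
      refine congrArg₂ M ?_ ?_ <;> refine Prod.ext ?_ ?_
      · exact congrArg a (Fin.ext (by simp))
      · exact congrArg a (Fin.ext (by simp))
      · exact congrArg b (Fin.ext (by simp))
      · exact congrArg b (Fin.ext (by simp))
    · rw [if_neg hc, if_neg (fun H => hc (hcond.mpr H))]
  · rw [dif_neg h, dif_neg (by omega)]

lemma embed_eq_placeAt (m : ℕ) {k : ℕ} (M : TensM F N k) :
    embed m M = placeAt m 0 M := by
  ext a b
  simp only [embed, placeAt, Matrix.of_apply]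
  by_cases h : k ≤ m
  · rw [dif_pos h, dif_pos (by omega : 0 + k ≤ m)]
    have hcond : (∀ t : Fin m, k ≤ t.val → a t = b t) ↔
        (∀ t : Fin m, (t.val < 0 ∨ 0 + k ≤ t.val) → a t = b t) :=
      ⟨fun H t ht => H t (by omega), fun H t h1 => H t (by omega)⟩
    by_cases hc : ∀ t : Fin m, k ≤ t.val → a t = b t
    · rw [if_pos hc, if_pos (hcond.mp hc)]
      refine congrArg₂ M ?_ ?_ <;> funext v
      · exact congrArg a (Fin.ext (by simp))
      · exact congrArg b (Fin.ext (by simp))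
    · rw [if_neg hc, if_neg (fun H => hc (hcond.mpr H))]
  · rw [dif_neg h, dif_neg (by omega)]

lemma place2_add' (m i : ℕ) (A B : RMat F N) :
    (place2 i (A + B) : TensM F N m) = place2 i A + place2 i B := by
  rw [place2_eq_placeAt, place2_eq_placeAt, place2_eq_placeAt, toT2_add, placeAt_add]

lemma place2_smul' (m i : ℕ) (c : F) (A : RMat F N) :
    (place2 i (c • A) : TensM F N m) = c • place2 i A := by
  rw [place2_eq_placeAt, place2_eq_placeAt, toT2_smul, placeAt_smul]

lemma place2_mul_same (m i : ℕ) (h : i + 1 < m) (A B : RMat F N) :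
    (place2 i A : TensM F N m) * place2 i B = place2 i (A * B) := by
  rw [place2_eq_placeAt, place2_eq_placeAt, place2_eq_placeAt,
    placeAt_mul m i (by omega), toT2_mul]

lemma place2_one' (m i : ℕ) (h : i + 1 < m) :
    (place2 i (1 : RMat F N) : TensM F N m) = 1 := by
  rw [place2_eq_placeAt, toT2_one, placeAt_one m i (by omega)]

lemma comm_at (m i j : ℕ) (h1 : i + 2 ≤ j) (h2 : j + 2 ≤ m) (A B : RMat F N) :
    (place2 i A : TensM F N m) * place2 j B = place2 j B * place2 i A := by
  rw [place2_eq_placeAt m i, place2_eq_placeAt m j, placeAt_comm m i j h1 h2]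

lemma embed_mul (m : ℕ) {k : ℕ} (h : k ≤ m) (A B : TensM F N k) :
    embed m (A * B) = embed m A * embed m B := by
  rw [embed_eq_placeAt, embed_eq_placeAt, embed_eq_placeAt, placeAt_mul m 0 (by omega)]

lemma embed_one (m : ℕ) {k : ℕ} (h : k ≤ m) : embed m (1 : TensM F N k) = 1 := by
  rw [embed_eq_placeAt, placeAt_one m 0 (by omega)]

lemma embed_smul (m : ℕ) {k : ℕ} (c : F) (A : TensM F N k) :
    embed m (c • A) = c • embed m A := by
  rw [embed_eq_placeAt, embed_eq_placeAt, placeAt_smul]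

lemma embed_add (m : ℕ) {k : ℕ} (A B : TensM F N k) :
    embed m (A + B) = embed m A + embed m B := by
  rw [embed_eq_placeAt, embed_eq_placeAt, embed_eq_placeAt, placeAt_add]

lemma embed_embed (m : ℕ) {k l : ℕ} (h1 : k ≤ l) (h2 : l ≤ m) (M : TensM F N k) :
    embed m (embed l M) = embed m M := by
  rw [embed_eq_placeAt l, embed_eq_placeAt m, embed_eq_placeAt m,
    placeAt_placeAt m 0 0 (by omega) (by omega)]

lemma embed_place2 (m : ℕ) {kk : ℕ} (i : ℕ) (h1 : i + 2 ≤ kk) (h2 : kk ≤ m) (A : RMat F N) :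
    embed m (place2 i A : TensM F N kk) = place2 i A := by
  rw [embed_eq_placeAt, place2_eq_placeAt kk i, place2_eq_placeAt m i,
    placeAt_placeAt m 0 i (by omega) (by omega), Nat.zero_add]

lemma embed_comm_place2 (m : ℕ) {k : ℕ} (i : ℕ) (h1 : k ≤ i) (h2 : i + 2 ≤ m)
    (M : TensM F N k) (A : RMat F N) :
    embed m M * place2 i A = place2 i A * embed m M := by
  rw [embed_eq_placeAt, place2_eq_placeAt, placeAt_comm m 0 i (by omega) h2]

end PlaceAt

section Derived

variable {F : Type*} [Field F] {N : ℕ} (Rh : RMat F N) (q : F)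

lemma hecke_at (hH : Rh * Rh = 1 + (q - q⁻¹) • Rh) (m i : ℕ) (h : i + 1 < m) :
    (place2 i Rh : TensM F N m) * place2 i Rh = 1 + (q - q⁻¹) • place2 i Rh := by
  rw [place2_mul_same m i h, hH, place2_add', place2_one' m i h, place2_smul']

lemma braid_at (hYB : YangBaxter Rh) (m i : ℕ) (h : i + 2 < m) :
    (place2 i Rh : TensM F N m) * place2 (i+1) Rh * place2 i Rh =
      place2 (i+1) Rh * place2 i Rh * place2 (i+1) Rh := by
  have h3 := hYB
  rw [YangBaxter] at h3
  rw [place2_eq_placeAt 3 0 Rh, place2_eq_placeAt 3 1 Rh] at h3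
  have h4 := congrArg (fun X : TensM F N 3 => placeAt m i X) h3
  rw [← placeAt_mul m i (by omega), ← placeAt_mul m i (by omega),
      ← placeAt_mul m i (by omega), ← placeAt_mul m i (by omega)] at h4
  rw [placeAt_placeAt m i 0 (by omega) (by omega),
      placeAt_placeAt m i 1 (by omega) (by omega)] at h4
  simp only [Nat.add_zero] at h4
  rw [← place2_eq_placeAt m i, ← place2_eq_placeAt m (i+1)] at h4
  exact h4

end Derived

section Chains

variable {F : Type*} [Field F] {N : ℕ} (Rh : RMat F N) (q : F)

/-- ascending chain `R_{t-j+1} ⋯ R_{t-1} R_t` (0-based positions). -/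
noncomputable def asc (m : ℕ) (Rh : RMat F N) (t : ℕ) : ℕ → TensM F N m
  | 0 => 1
  | j + 1 => place2 (t - j) Rh * asc m Rh t j

/-- descending chain `R_t R_{t-1} ⋯ R_{t-j+1}`. -/
noncomputable def dsc (m : ℕ) (Rh : RMat F N) (t : ℕ) : ℕ → TensM F N m
  | 0 => 1
  | j + 1 => dsc m Rh t j * place2 (t - j) Rh

lemma asc_append (m t : ℕ) : ∀ j, asc m Rh t j * place2 (t+1) Rh = asc m Rh (t+1) (j+1) := by
  intro j
  induction j with
  | zero => simp [asc]
  | succ j ihj =>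
      show (place2 (t - j) Rh * asc m Rh t j) * place2 (t+1) Rh = _
      rw [mul_assoc, ihj]
      show _ = place2 (t + 1 - (j+1)) Rh * asc m Rh (t+1) (j+1)
      rw [Nat.succ_sub_succ]

lemma dsc_append (m t : ℕ) : ∀ j, place2 (t+1) Rh * dsc m Rh t j = dsc m Rh (t+1) (j+1) := by
  intro j
  induction j with
  | zero => simp [dsc]
  | succ j ihj =>
      show place2 (t+1) Rh * (dsc m Rh t j * place2 (t - j) Rh) = _
      rw [← mul_assoc, ihj]
      show _ = dsc m Rh (t+1) (j+1) * place2 (t + 1 - (j+1)) Rh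
      rw [Nat.succ_sub_succ]

lemma top_asc (hYB : YangBaxter Rh) (m t : ℕ) (hm : t + 2 ≤ m) :
    ∀ j, 2 ≤ j → j ≤ t + 1 →
      place2 t Rh * asc m Rh t j = asc m Rh t j * place2 (t-1) Rh := by
  intro j
  induction j with
  | zero => omega
  | succ j ihj =>
      intro h2 hj
      rcases Nat.lt_or_ge j 2 with hj2 | hj2
      · -- j + 1 = 2, i.e. j = 1
        have hj1 : j = 1 := by omega
        subst hj1
        have ht1 : 1 ≤ t := by omega
        show place2 t Rh * (place2 (t - 1) Rh * (place2 (t - 0) Rh * 1)) = _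
        have hbr := braid_at Rh hYB m (t-1) (by omega)
        have e1 : t - 1 + 1 = t := by omega
        rw [e1] at hbr
        show place2 t Rh * (place2 (t - 1) Rh * (place2 (t - 0) Rh * 1)) =
          (place2 (t - 1) Rh * (place2 (t - 0) Rh * 1)) * place2 (t-1) Rh
        simp only [Nat.sub_zero, mul_one, ← mul_assoc]
        exact hbr.symm
      · -- j ≥ 2
        show place2 t Rh * (place2 (t - j) Rh * asc m Rh t j) = _
        rw [← mul_assoc, ← comm_at m (t-j) t (by omega) (by omega) Rh Rh, mul_assoc,
          ihj hj2 (by omega), ← mul_assoc]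
        rfl

lemma top_dsc (hYB : YangBaxter Rh) (m t : ℕ) (hm : t + 2 ≤ m) :
    ∀ j, 2 ≤ j → j ≤ t + 1 →
      dsc m Rh t j * place2 t Rh = place2 (t-1) Rh * dsc m Rh t j := by
  intro j
  induction j with
  | zero => omega
  | succ j ihj =>
      intro h2 hj
      rcases Nat.lt_or_ge j 2 with hj2 | hj2
      · have hj1 : j = 1 := by omega
        subst hj1
        have ht1 : 1 ≤ t := by omega
        show ((1 * place2 (t - 0) Rh) * place2 (t - 1) Rh) * place2 t Rh =
          place2 (t-1) Rh * ((1 * place2 (t - 0) Rh) * place2 (t - 1) Rh)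
        have hbr := braid_at Rh hYB m (t-1) (by omega)
        have e1 : t - 1 + 1 = t := by omega
        rw [e1] at hbr
        simp only [Nat.sub_zero, one_mul, ← mul_assoc]
        exact hbr.symm
      · show (dsc m Rh t j * place2 (t - j) Rh) * place2 t Rh = _
        rw [mul_assoc, comm_at m (t-j) t (by omega) (by omega) Rh Rh, ← mul_assoc,
          ihj hj2 (by omega), mul_assoc]
        rfl

/-- `G'_k = ∑_{j<k} q^{j+1-k} R_{k-j-1} ⋯ R_{k-2}` (ascending products). -/
noncomputable def Gp (m : ℕ) (Rh : RMat F N) (q : F) (k : ℕ) : TensM F N m :=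
  ∑ j ∈ Finset.range k, (q⁻¹)^(k-1-j) • asc m Rh (k-2) j

noncomputable def Gq (m : ℕ) (Rh : RMat F N) (q : F) (k : ℕ) : TensM F N m :=
  ∑ j ∈ Finset.range k, (q⁻¹)^(k-1-j) • dsc m Rh (k-2) j

lemma Gp_top (m n : ℕ) : Gp m Rh q (n+1) * place2 n Rh =
    ∑ j ∈ Finset.range (n+1), (q⁻¹)^(n-j) • asc m Rh n (j+1) := by
  cases n with
  | zero => simp [Gp, asc]
  | succ p =>
      rw [Gp, Finset.sum_mul]
      refine Finset.sum_congr rfl (fun j hj => ?_)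
      have e1 : p + 2 - 1 - j = p + 1 - j := by omega
      have e2 : p + 2 - 2 = p := by omega
      rw [smul_mul_assoc, e1, e2, asc_append]

lemma Gq_top (m n : ℕ) : place2 n Rh * Gq m Rh q (n+1) =
    ∑ j ∈ Finset.range (n+1), (q⁻¹)^(n-j) • dsc m Rh n (j+1) := by
  cases n with
  | zero => simp [Gq, dsc]
  | succ p =>
      rw [Gq, Finset.mul_sum]
      refine Finset.sum_congr rfl (fun j hj => ?_)
      have e1 : p + 2 - 1 - j = p + 1 - j := by omega
      have e2 : p + 2 - 2 = p := by omega
      rw [mul_smul_comm, e1, e2, dsc_append]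

end Chains

section MainInd

variable {F : Type*} [Field F] {N : ℕ}

lemma smul_cancel {M : Type*} [AddCommMonoid M] [Module F M] {c : F} (hc : c ≠ 0)
    {x y : M} (h : c • x = c • y) : x = y := by
  have := congrArg (fun z => c⁻¹ • z) h
  simpa [smul_smul, inv_mul_cancel₀ hc] using this

/-- embedded symmetrizer -/
noncomputable def ES (Rh : RMat F N) (q : F) (m k : ℕ) : TensM F N m :=
  embed m (syms Rh q k)

variable (Rh : RMat F N) (q : F)

lemma scalC (hq : q ≠ 0) (n : ℕ) : (q⁻¹ : F)^n = q * q⁻¹^(n+1) := by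
  rw [pow_succ, ← mul_assoc, mul_comm q, mul_assoc, mul_inv_cancel₀ hq, mul_one]

lemma scalA (hq : q ≠ 0) (hδ : q - q⁻¹ ≠ 0) (n : ℕ) :
    (q⁻¹)^(n+1) + qnum q (n+1) * q = qnum q (n+2) := by
  rw [qnum, qnum, div_mul_eq_mul_div, eq_div_iff hδ, add_mul, div_mul_cancel₀ _ hδ]
  ring

lemma ES_unfold (m n : ℕ) (hm : n + 2 ≤ m) (hq2 : qnum q (n+2) ≠ 0) :
    qnum q (n+2) • ES Rh q m (n+2) =
      ES Rh q m (n+1) *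
        ((q⁻¹)^(n+1) • (1 : TensM F N m) + qnum q (n+1) • place2 n Rh) *
        ES Rh q m (n+1) := by
  have hunfold : syms Rh q (n+2) = (qnum q (n+2))⁻¹ •
      (embed (n+2) (syms Rh q (n+1)) *
        ((q⁻¹)^(n+1) • (1 : TensM F N (n+2)) + qnum q (n+1) • place2 n Rh) *
        embed (n+2) (syms Rh q (n+1))) := rfl
  rw [ES, hunfold, embed_smul, embed_mul m (by omega), embed_mul m (by omega),
    embed_add, embed_smul, embed_smul, embed_one m (by omega),
    embed_place2 m n (by omega) (by omega), embed_embed m (by omega) (by omega),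
    smul_smul, mul_inv_cancel₀ hq2, one_smul, ES]

set_option maxHeartbeats 1600000 in
theorem mainQ (hq : q ≠ 0) (hqn : ∀ k : ℕ, 1 ≤ k → qnum q k ≠ 0)
    (hYB : YangBaxter Rh) (hH : Rh * Rh = 1 + (q - q⁻¹) • Rh) :
    ∀ k m, k ≤ m →
      (ES Rh q m k * ES Rh q m k = ES Rh q m k) ∧
      (∀ i, i + 2 ≤ k → place2 i Rh * ES Rh q m k = q • ES Rh q m k ∧
          ES Rh q m k * place2 i Rh = q • ES Rh q m k) ∧
      (qnum q k • ES Rh q m k = Gp m Rh q k * ES Rh q m (k-1)) ∧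
      (qnum q k • ES Rh q m k = ES Rh q m (k-1) * Gq m Rh q k) := by
  have hδ : q - q⁻¹ ≠ 0 := by
    intro h0
    exact hqn 1 le_rfl (by simp [qnum, h0])
  intro k
  induction k using Nat.strong_induction_on with
  | _ k ih =>
  obtain _ | _ | n := k
  · -- k = 0
    intro m hm
    have hE : ES Rh q m 0 = 1 := by
      rw [ES, show syms Rh q 0 = 1 from rfl, embed_one m (by omega)]
    have hq0 : qnum q 0 = 0 := by simp [qnum]
    refine ⟨by rw [hE, one_mul], fun i hi => absurd hi (by omega), ?_, ?_⟩
    · rw [hE, hq0, zero_smul, Gp, Finset.range_zero, Finset.sum_empty, zero_mul]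
    · rw [hE, hq0, zero_smul, Gq, Finset.range_zero, Finset.sum_empty, mul_zero]
  · -- k = 1
    intro m hm
    have hE : ES Rh q m 1 = 1 := by
      rw [ES, show syms Rh q 1 = 1 from rfl, embed_one m (by omega)]
    have hE0 : ES Rh q m 0 = 1 := by
      rw [ES, show syms Rh q 0 = 1 from rfl, embed_one m (by omega)]
    have hq1 : qnum q 1 = 1 := by
      rw [qnum, pow_one, pow_one]
      exact div_self hδ
    have hGp : Gp m Rh q 1 = 1 := by
      rw [Gp, Finset.sum_range_one]
      show (q⁻¹)^(1-1-0) • asc m Rh (1-2) 0 = 1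
      rw [show (1:ℕ)-1-0 = 0 from rfl, pow_zero, one_smul]
      rfl
    have hGq : Gq m Rh q 1 = 1 := by
      rw [Gq, Finset.sum_range_one]
      show (q⁻¹)^(1-1-0) • dsc m Rh (1-2) 0 = 1
      rw [show (1:ℕ)-1-0 = 0 from rfl, pow_zero, one_smul]
      rfl
    refine ⟨by rw [hE, one_mul], fun i hi => absurd hi (by omega), ?_, ?_⟩
    · rw [hE, hq1, one_smul, hGp, show (1:ℕ)-1 = 0 from rfl, hE0, one_mul]
    · rw [hE, hq1, one_smul, hGq, show (1:ℕ)-1 = 0 from rfl, hE0, mul_one]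
  · -- k = n + 2
    intro m hm
    have hm2 : n + 2 ≤ m := hm
    have hq2 : qnum q (n+2) ≠ 0 := hqn (n+2) (by omega)
    have hq1 : qnum q (n+1) ≠ 0 := hqn (n+1) (by omega)
    obtain ⟨ihA1, ihB1, ihC1, ihC1'⟩ := ih (n+1) (by omega) m (by omega)
    obtain ⟨ihA0, -, -, -⟩ := ih n (by omega) m (by omega)
    rw [show n+1-1 = n from rfl] at ihC1 ihC1'
    have hTS : ES Rh q m n * ES Rh q m (n+1) = ES Rh q m (n+1) := by
      apply smul_cancel hq1
      rw [← mul_smul_comm, ihC1', ← mul_assoc, ihA0, ← ihC1']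
    have hST : ES Rh q m (n+1) * ES Rh q m n = ES Rh q m (n+1) := by
      apply smul_cancel hq1
      rw [← smul_mul_assoc, ihC1, mul_assoc, ihA0, ← ihC1]
    have hcomm : ES Rh q m n * place2 n Rh = place2 n Rh * ES Rh q m n :=
      embed_comm_place2 m n le_rfl (by omega) _ Rh
    have hZ := ES_unfold Rh q m n hm2 hq2
    have hSRS : qnum q (n+1) • (ES Rh q m (n+1) * place2 n Rh * ES Rh q m (n+1)) =
        ∑ j ∈ Finset.range (n+1), (q⁻¹)^(n-j) • (asc m Rh n (j+1) * ES Rh q m (n+1)) := by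
      calc qnum q (n+1) • (ES Rh q m (n+1) * place2 n Rh * ES Rh q m (n+1))
          = ((qnum q (n+1) • ES Rh q m (n+1)) * place2 n Rh) * ES Rh q m (n+1) := by
            rw [smul_mul_assoc, smul_mul_assoc]
        _ = ((Gp m Rh q (n+1) * ES Rh q m n) * place2 n Rh) * ES Rh q m (n+1) := by
            rw [ihC1]
        _ = (Gp m Rh q (n+1) * place2 n Rh) * (ES Rh q m n * ES Rh q m (n+1)) := by
            rw [mul_assoc (Gp m Rh q (n+1)), hcomm, ← mul_assoc, ← mul_assoc,
              mul_assoc _ (ES Rh q m n) (ES Rh q m (n+1))]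
        _ = (Gp m Rh q (n+1) * place2 n Rh) * ES Rh q m (n+1) := by rw [hTS]
        _ = (∑ j ∈ Finset.range (n+1), (q⁻¹)^(n-j) • asc m Rh n (j+1)) * ES Rh q m (n+1) := by
            rw [Gp_top]
        _ = ∑ j ∈ Finset.range (n+1), (q⁻¹)^(n-j) • (asc m Rh n (j+1) * ES Rh q m (n+1)) := by
            simp only [Finset.sum_mul, smul_mul_assoc]
    have hSRS' : qnum q (n+1) • (ES Rh q m (n+1) * place2 n Rh * ES Rh q m (n+1)) =
        ∑ j ∈ Finset.range (n+1), (q⁻¹)^(n-j) • (ES Rh q m (n+1) * dsc m Rh n (j+1)) := by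
      calc qnum q (n+1) • (ES Rh q m (n+1) * place2 n Rh * ES Rh q m (n+1))
          = ES Rh q m (n+1) * (place2 n Rh * (qnum q (n+1) • ES Rh q m (n+1))) := by
            rw [mul_smul_comm, mul_smul_comm, mul_assoc]
        _ = ES Rh q m (n+1) * (place2 n Rh * (ES Rh q m n * Gq m Rh q (n+1))) := by
            rw [ihC1']
        _ = (ES Rh q m (n+1) * ES Rh q m n) * (place2 n Rh * Gq m Rh q (n+1)) := by
            rw [← mul_assoc (place2 n Rh) (ES Rh q m n), ← hcomm]
            simp only [mul_assoc]
        _ = ES Rh q m (n+1) * (place2 n Rh * Gq m Rh q (n+1)) := by rw [hST]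
        _ = ES Rh q m (n+1) * (∑ j ∈ Finset.range (n+1), (q⁻¹)^(n-j) • dsc m Rh n (j+1)) := by
            rw [Gq_top]
        _ = ∑ j ∈ Finset.range (n+1), (q⁻¹)^(n-j) • (ES Rh q m (n+1) * dsc m Rh n (j+1)) := by
            simp only [Finset.mul_sum, mul_smul_comm]
    have hEXE : ES Rh q m (n+1) *
        ((q⁻¹)^(n+1) • (1 : TensM F N m) + qnum q (n+1) • place2 n Rh) *
        ES Rh q m (n+1) =
        (q⁻¹)^(n+1) • ES Rh q m (n+1) +
          qnum q (n+1) • (ES Rh q m (n+1) * place2 n Rh * ES Rh q m (n+1)) := by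
      rw [mul_add, add_mul, mul_smul_comm, mul_one, smul_mul_assoc, ihA1,
        mul_smul_comm, smul_mul_assoc]
    have hGpE : Gp m Rh q (n+2) * ES Rh q m (n+1) =
        (∑ j ∈ Finset.range (n+1), (q⁻¹)^(n-j) • (asc m Rh n (j+1) * ES Rh q m (n+1))) +
          (q⁻¹)^(n+1) • ES Rh q m (n+1) := by
      rw [Gp, Finset.sum_mul, Finset.sum_range_succ']
      congr 1
      · refine Finset.sum_congr rfl fun j hj => ?_
        rw [smul_mul_assoc, show n+2-1-(j+1) = n-j from by omega,
          show n+2-2 = n from rfl]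
      · rw [smul_mul_assoc, show n+2-1-0 = n+1 from by omega,
          show n+2-2 = n from rfl, show asc m Rh n 0 = 1 from rfl, one_mul]
    have hGqE : ES Rh q m (n+1) * Gq m Rh q (n+2) =
        (∑ j ∈ Finset.range (n+1), (q⁻¹)^(n-j) • (ES Rh q m (n+1) * dsc m Rh n (j+1))) +
          (q⁻¹)^(n+1) • ES Rh q m (n+1) := by
      rw [Gq, Finset.mul_sum, Finset.sum_range_succ']
      congr 1
      · refine Finset.sum_congr rfl fun j hj => ?_
        rw [mul_smul_comm, show n+2-1-(j+1) = n-j from by omega,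
          show n+2-2 = n from rfl]
      · rw [mul_smul_comm, show n+2-1-0 = n+1 from by omega,
          show n+2-2 = n from rfl, show dsc m Rh n 0 = 1 from rfl, mul_one]
    have hC : qnum q (n+2) • ES Rh q m (n+2) = Gp m Rh q (n+2) * ES Rh q m (n+1) := by
      rw [hZ, hEXE, hSRS, hGpE, add_comm]
    have hC' : qnum q (n+2) • ES Rh q m (n+2) = ES Rh q m (n+1) * Gq m Rh q (n+2) := by
      rw [hZ, hEXE, hSRS', hGqE, add_comm]
    -- top absorption, left
    have hRnGpS : place2 n Rh * (Gp m Rh q (n+2) * ES Rh q m (n+1)) =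
        q • (Gp m Rh q (n+2) * ES Rh q m (n+1)) := by
      have expandL : place2 n Rh * (Gp m Rh q (n+2) * ES Rh q m (n+1)) =
          ((∑ j ∈ Finset.range n,
            (q * (q⁻¹)^(n-1-j)) • (asc m Rh n (j+2) * ES Rh q m (n+1))) +
          (q⁻¹)^n • (ES Rh q m (n+1) +
            (q - q⁻¹) • (place2 n Rh * ES Rh q m (n+1)))) +
          (q⁻¹)^(n+1) • (place2 n Rh * ES Rh q m (n+1)) := by
        have e0 : place2 n Rh * Gp m Rh q (n+2) =
            ∑ j ∈ Finset.range (n+2), (q⁻¹)^(n+1-j) • (place2 n Rh * asc m Rh n j) := by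
          rw [Gp, Finset.mul_sum]
          refine Finset.sum_congr rfl fun j hj => ?_
          rw [mul_smul_comm, show n+2-1-j = n+1-j from by omega, show n+2-2 = n from rfl]
        rw [← mul_assoc, e0, Finset.sum_mul, Finset.sum_range_succ', Finset.sum_range_succ']
        congr 1
        · congr 1
          · refine Finset.sum_congr rfl fun j hj => ?_
            have hjn : j < n := Finset.mem_range.mp hj
            rw [smul_mul_assoc, show n+1-(j+1+1) = n-1-j from by omega,
              top_asc Rh hYB m n (by omega) (j+2) (by omega) (by omega),
              mul_assoc, (ihB1 (n-1) (by omega)).1, mul_smul_comm, smul_smul,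
              mul_comm ((q⁻¹:F)^(n-1-j)) q]
          · rw [smul_mul_assoc, show n+1-(0+1) = n from by omega,
              show asc m Rh n 1 = place2 (n-0) Rh * 1 from rfl, Nat.sub_zero, mul_one,
              hecke_at Rh q hH m n (by omega), add_mul, one_mul, smul_mul_assoc, smul_add]
        · rw [smul_mul_assoc, show n+1-0 = n+1 from rfl,
            show asc m Rh n 0 = 1 from rfl, mul_one]
      have expandR : q • (Gp m Rh q (n+2) * ES Rh q m (n+1)) =
          ((∑ j ∈ Finset.range n,
            (q * (q⁻¹)^(n-1-j)) • (asc m Rh n (j+2) * ES Rh q m (n+1))) +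
          (q * (q⁻¹)^n) • (place2 n Rh * ES Rh q m (n+1))) +
          (q⁻¹)^n • ES Rh q m (n+1) := by
        rw [Gp, Finset.sum_mul, Finset.smul_sum, Finset.sum_range_succ', Finset.sum_range_succ']
        congr 1
        · congr 1
          · refine Finset.sum_congr rfl fun j hj => ?_
            rw [smul_mul_assoc, smul_smul, show n+2-1-(j+1+1) = n-1-j from by omega,
              show n+2-2 = n from rfl]
          · rw [smul_mul_assoc, smul_smul, show n+2-1-(0+1) = n from by omega,
              show n+2-2 = n from rfl,
              show asc m Rh n 1 = place2 (n-0) Rh * 1 from rfl, Nat.sub_zero, mul_one]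
        · rw [smul_mul_assoc, smul_smul, show n+2-1-0 = n+1 from by omega,
            show n+2-2 = n from rfl, show asc m Rh n 0 = 1 from rfl, one_mul,
            ← scalC q hq n]
      rw [expandL, expandR]
      module
    -- top absorption, right
    have hSGqRn : (ES Rh q m (n+1) * Gq m Rh q (n+2)) * place2 n Rh =
        q • (ES Rh q m (n+1) * Gq m Rh q (n+2)) := by
      have expandL : (ES Rh q m (n+1) * Gq m Rh q (n+2)) * place2 n Rh =
          ((∑ j ∈ Finset.range n,
            (q * (q⁻¹)^(n-1-j)) • (ES Rh q m (n+1) * dsc m Rh n (j+2))) +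
          (q⁻¹)^n • (ES Rh q m (n+1) +
            (q - q⁻¹) • (ES Rh q m (n+1) * place2 n Rh))) +
          (q⁻¹)^(n+1) • (ES Rh q m (n+1) * place2 n Rh) := by
        have e0 : Gq m Rh q (n+2) * place2 n Rh =
            ∑ j ∈ Finset.range (n+2), (q⁻¹)^(n+1-j) • (dsc m Rh n j * place2 n Rh) := by
          rw [Gq, Finset.sum_mul]
          refine Finset.sum_congr rfl fun j hj => ?_
          rw [smul_mul_assoc, show n+2-1-j = n+1-j from by omega, show n+2-2 = n from rfl]
        rw [mul_assoc, e0, Finset.mul_sum, Finset.sum_range_succ', Finset.sum_range_succ']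
        congr 1
        · congr 1
          · refine Finset.sum_congr rfl fun j hj => ?_
            have hjn : j < n := Finset.mem_range.mp hj
            rw [mul_smul_comm, top_dsc Rh hYB m n (by omega) (j+2) (by omega) (by omega),
              show n+1-(j+1+1) = n-1-j from by omega,
              ← mul_assoc, (ihB1 (n-1) (by omega)).2, smul_mul_assoc, smul_smul,
              mul_comm ((q⁻¹:F)^(n-1-j)) q]
          · rw [mul_smul_comm, show n+1-(0+1) = n from by omega,
              show dsc m Rh n 1 = 1 * place2 (n-0) Rh from rfl, Nat.sub_zero, one_mul,
              hecke_at Rh q hH m n (by omega), mul_add, mul_one, mul_smul_comm, smul_add]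
        · rw [mul_smul_comm, show n+1-0 = n+1 from rfl,
            show dsc m Rh n 0 = 1 from rfl, one_mul]
      have expandR : q • (ES Rh q m (n+1) * Gq m Rh q (n+2)) =
          ((∑ j ∈ Finset.range n,
            (q * (q⁻¹)^(n-1-j)) • (ES Rh q m (n+1) * dsc m Rh n (j+2))) +
          (q * (q⁻¹)^n) • (ES Rh q m (n+1) * place2 n Rh)) +
          (q⁻¹)^n • ES Rh q m (n+1) := by
        rw [Gq, Finset.mul_sum, Finset.smul_sum, Finset.sum_range_succ', Finset.sum_range_succ']
        congr 1
        · congr 1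
          · refine Finset.sum_congr rfl fun j hj => ?_
            rw [mul_smul_comm, smul_smul, show n+2-1-(j+1+1) = n-1-j from by omega,
              show n+2-2 = n from rfl]
          · rw [mul_smul_comm, smul_smul, show n+2-1-(0+1) = n from by omega,
              show n+2-2 = n from rfl,
              show dsc m Rh n 1 = 1 * place2 (n-0) Rh from rfl, Nat.sub_zero, one_mul]
        · rw [mul_smul_comm, smul_smul, show n+2-1-0 = n+1 from by omega,
            show n+2-2 = n from rfl, show dsc m Rh n 0 = 1 from rfl, mul_one,
            ← scalC q hq n]
      rw [expandL, expandR]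
      module
    have hBL : place2 n Rh * ES Rh q m (n+2) = q • ES Rh q m (n+2) := by
      apply smul_cancel hq2
      calc qnum q (n+2) • (place2 n Rh * ES Rh q m (n+2))
          = place2 n Rh * (qnum q (n+2) • ES Rh q m (n+2)) := (mul_smul_comm _ _ _).symm
        _ = place2 n Rh * (Gp m Rh q (n+2) * ES Rh q m (n+1)) := by rw [hC]
        _ = q • (Gp m Rh q (n+2) * ES Rh q m (n+1)) := hRnGpS
        _ = q • (qnum q (n+2) • ES Rh q m (n+2)) := by rw [← hC]
        _ = qnum q (n+2) • (q • ES Rh q m (n+2)) := smul_comm _ _ _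
    have hBR : ES Rh q m (n+2) * place2 n Rh = q • ES Rh q m (n+2) := by
      apply smul_cancel hq2
      calc qnum q (n+2) • (ES Rh q m (n+2) * place2 n Rh)
          = (qnum q (n+2) • ES Rh q m (n+2)) * place2 n Rh := (smul_mul_assoc _ _ _).symm
        _ = (ES Rh q m (n+1) * Gq m Rh q (n+2)) * place2 n Rh := by rw [hC']
        _ = q • (ES Rh q m (n+1) * Gq m Rh q (n+2)) := hSGqRn
        _ = q • (qnum q (n+2) • ES Rh q m (n+2)) := by rw [← hC']
        _ = qnum q (n+2) • (q • ES Rh q m (n+2)) := smul_comm _ _ _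
    have hBall : ∀ i, i + 2 ≤ n+2 → place2 i Rh * ES Rh q m (n+2) = q • ES Rh q m (n+2) ∧
        ES Rh q m (n+2) * place2 i Rh = q • ES Rh q m (n+2) := by
      intro i hi
      by_cases hin : i = n
      · subst hin; exact ⟨hBL, hBR⟩
      · have hi' : i + 2 ≤ n + 1 := by omega
        obtain ⟨ihl, ihr⟩ := ihB1 i hi'
        constructor
        · apply smul_cancel hq2
          calc qnum q (n+2) • (place2 i Rh * ES Rh q m (n+2))
              = place2 i Rh * (qnum q (n+2) • ES Rh q m (n+2)) := (mul_smul_comm _ _ _).symm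
            _ = place2 i Rh * (ES Rh q m (n+1) *
                  ((q⁻¹)^(n+1) • (1 : TensM F N m) + qnum q (n+1) • place2 n Rh) *
                  ES Rh q m (n+1)) := by rw [hZ]
            _ = ((place2 i Rh * ES Rh q m (n+1)) *
                  ((q⁻¹)^(n+1) • (1 : TensM F N m) + qnum q (n+1) • place2 n Rh)) *
                  ES Rh q m (n+1) := by rw [← mul_assoc, ← mul_assoc]
            _ = (((q • ES Rh q m (n+1))) *
                  ((q⁻¹)^(n+1) • (1 : TensM F N m) + qnum q (n+1) • place2 n Rh)) *
                  ES Rh q m (n+1) := by rw [ihl]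
            _ = q • (ES Rh q m (n+1) *
                  ((q⁻¹)^(n+1) • (1 : TensM F N m) + qnum q (n+1) • place2 n Rh) *
                  ES Rh q m (n+1)) := by rw [smul_mul_assoc, smul_mul_assoc]
            _ = q • (qnum q (n+2) • ES Rh q m (n+2)) := by rw [← hZ]
            _ = qnum q (n+2) • (q • ES Rh q m (n+2)) := smul_comm _ _ _
        · apply smul_cancel hq2
          calc qnum q (n+2) • (ES Rh q m (n+2) * place2 i Rh)
              = (qnum q (n+2) • ES Rh q m (n+2)) * place2 i Rh := (smul_mul_assoc _ _ _).symm
            _ = (ES Rh q m (n+1) *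
                  ((q⁻¹)^(n+1) • (1 : TensM F N m) + qnum q (n+1) • place2 n Rh) *
                  ES Rh q m (n+1)) * place2 i Rh := by rw [hZ]
            _ = ES Rh q m (n+1) *
                  ((q⁻¹)^(n+1) • (1 : TensM F N m) + qnum q (n+1) • place2 n Rh) *
                  (ES Rh q m (n+1) * place2 i Rh) := by rw [mul_assoc]
            _ = ES Rh q m (n+1) *
                  ((q⁻¹)^(n+1) • (1 : TensM F N m) + qnum q (n+1) • place2 n Rh) *
                  (q • ES Rh q m (n+1)) := by rw [ihr]
            _ = q • (ES Rh q m (n+1) *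
                  ((q⁻¹)^(n+1) • (1 : TensM F N m) + qnum q (n+1) • place2 n Rh) *
                  ES Rh q m (n+1)) := by rw [mul_smul_comm]
            _ = q • (qnum q (n+2) • ES Rh q m (n+2)) := by rw [← hZ]
            _ = qnum q (n+2) • (q • ES Rh q m (n+2)) := smul_comm _ _ _
    have hRnW : place2 n Rh * (ES Rh q m (n+1) *
        ((q⁻¹)^(n+1) • (1 : TensM F N m) + qnum q (n+1) • place2 n Rh) *
        ES Rh q m (n+1)) = q • (ES Rh q m (n+1) *
        ((q⁻¹)^(n+1) • (1 : TensM F N m) + qnum q (n+1) • place2 n Rh) *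
        ES Rh q m (n+1)) := by
      rw [← hZ, mul_smul_comm, hBL, smul_comm]
    have hEW : ES Rh q m (n+1) * (ES Rh q m (n+1) *
        ((q⁻¹)^(n+1) • (1 : TensM F N m) + qnum q (n+1) • place2 n Rh) *
        ES Rh q m (n+1)) = ES Rh q m (n+1) *
        ((q⁻¹)^(n+1) • (1 : TensM F N m) + qnum q (n+1) • place2 n Rh) *
        ES Rh q m (n+1) := by
      rw [← mul_assoc, ← mul_assoc, ihA1]
    have hXW : ((q⁻¹)^(n+1) • (1 : TensM F N m) + qnum q (n+1) • place2 n Rh) *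
        (ES Rh q m (n+1) *
        ((q⁻¹)^(n+1) • (1 : TensM F N m) + qnum q (n+1) • place2 n Rh) *
        ES Rh q m (n+1)) = qnum q (n+2) • (ES Rh q m (n+1) *
        ((q⁻¹)^(n+1) • (1 : TensM F N m) + qnum q (n+1) • place2 n Rh) *
        ES Rh q m (n+1)) := by
      rw [add_mul, smul_mul_assoc, one_mul, smul_mul_assoc, hRnW, smul_smul,
        ← add_smul, scalA q hq hδ n]
    have hA : ES Rh q m (n+2) * ES Rh q m (n+2) = ES Rh q m (n+2) := by
      apply smul_cancel (mul_ne_zero hq2 hq2)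
      calc (qnum q (n+2) * qnum q (n+2)) • (ES Rh q m (n+2) * ES Rh q m (n+2))
          = (qnum q (n+2) • ES Rh q m (n+2)) * (qnum q (n+2) • ES Rh q m (n+2)) := by
            rw [smul_mul_assoc, mul_smul_comm, smul_smul]
        _ = (ES Rh q m (n+1) *
              ((q⁻¹)^(n+1) • (1 : TensM F N m) + qnum q (n+1) • place2 n Rh) *
              ES Rh q m (n+1)) * (ES Rh q m (n+1) *
              ((q⁻¹)^(n+1) • (1 : TensM F N m) + qnum q (n+1) • place2 n Rh) *
              ES Rh q m (n+1)) := by rw [hZ]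
        _ = (ES Rh q m (n+1) *
              ((q⁻¹)^(n+1) • (1 : TensM F N m) + qnum q (n+1) • place2 n Rh)) *
              (ES Rh q m (n+1) * (ES Rh q m (n+1) *
              ((q⁻¹)^(n+1) • (1 : TensM F N m) + qnum q (n+1) • place2 n Rh) *
              ES Rh q m (n+1))) := by rw [mul_assoc]
        _ = (ES Rh q m (n+1) *
              ((q⁻¹)^(n+1) • (1 : TensM F N m) + qnum q (n+1) • place2 n Rh)) *
              (ES Rh q m (n+1) *
              ((q⁻¹)^(n+1) • (1 : TensM F N m) + qnum q (n+1) • place2 n Rh) *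
              ES Rh q m (n+1)) := by rw [hEW]
        _ = ES Rh q m (n+1) *
              (((q⁻¹)^(n+1) • (1 : TensM F N m) + qnum q (n+1) • place2 n Rh) *
              (ES Rh q m (n+1) *
              ((q⁻¹)^(n+1) • (1 : TensM F N m) + qnum q (n+1) • place2 n Rh) *
              ES Rh q m (n+1))) := by rw [mul_assoc]
        _ = ES Rh q m (n+1) * (qnum q (n+2) • (ES Rh q m (n+1) *
              ((q⁻¹)^(n+1) • (1 : TensM F N m) + qnum q (n+1) • place2 n Rh) *
              ES Rh q m (n+1))) := by rw [hXW]
        _ = qnum q (n+2) • (ES Rh q m (n+1) * (ES Rh q m (n+1) *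
              ((q⁻¹)^(n+1) • (1 : TensM F N m) + qnum q (n+1) • place2 n Rh) *
              ES Rh q m (n+1))) := mul_smul_comm _ _ _
        _ = qnum q (n+2) • (ES Rh q m (n+1) *
              ((q⁻¹)^(n+1) • (1 : TensM F N m) + qnum q (n+1) • place2 n Rh) *
              ES Rh q m (n+1)) := by rw [hEW]
        _ = qnum q (n+2) • (qnum q (n+2) • ES Rh q m (n+2)) := by rw [← hZ]
        _ = (qnum q (n+2) * qnum q (n+2)) • ES Rh q m (n+2) := smul_smul _ _ _
    exact ⟨hA, hBall, hC, hC'⟩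

end MainInd


theorem symmetrizer_recursion {F : Type*} [Field F] {N : ℕ} (hN : 1 ≤ N) (q : F) (hq : q ≠ 0)
    (hqnum : ∀ k : ℕ, 1 ≤ k → qnum q k ≠ 0)
    (Rh : RMat F N) (hRinv : IsUnit Rh.det)
    (hYB : YangBaxter Rh) (hHecke : Hecke q Rh)
    (k : ℕ) (hk1 : 1 ≤ k) :
    q⁻¹ ^ k • embed (k + 1) (syms Rh q k) =
      qnum q (k + 1) • syms Rh q (k + 1) -
        qnum q k •
          (embed (k + 1) (syms Rh q k) * place2 (k - 1) Rh *
            embed (k + 1) (syms Rh q k)) := by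
  obtain ⟨n, rfl⟩ : ∃ n, k = n + 1 := ⟨k - 1, by omega⟩
  have hq2 : qnum q (n+2) ≠ 0 := hqnum (n+2) (by omega)
  obtain ⟨hA1, -, -, -⟩ := mainQ Rh q hq hqnum hYB (by exact hHecke) (n+1) (n+2) (by omega)
  have hA1' : embed (n+2) (syms Rh q (n+1)) * embed (n+2) (syms Rh q (n+1)) =
      embed (n+2) (syms Rh q (n+1)) := hA1
  have hZ : qnum q (n+2) • syms Rh q (n+2) =
      q⁻¹^(n+1) • embed (n+2) (syms Rh q (n+1)) +
        qnum q (n+1) • (embed (n+2) (syms Rh q (n+1)) * place2 n Rh *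
          embed (n+2) (syms Rh q (n+1))) := by
    rw [show syms Rh q (n+2) = (qnum q (n+2))⁻¹ •
        (embed (n+2) (syms Rh q (n+1)) *
          ((q⁻¹)^(n+1) • (1 : TensM F N (n+2)) + qnum q (n+1) • place2 n Rh) *
          embed (n+2) (syms Rh q (n+1))) from rfl,
      smul_smul, mul_inv_cancel₀ hq2, one_smul,
      mul_add, add_mul, mul_smul_comm, mul_one, smul_mul_assoc, hA1',
      mul_smul_comm, smul_mul_assoc]
  rw [show n+1+1 = n+2 from rfl, show n+1-1 = n from rfl, hZ, add_sub_cancel_right]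
end

section
/- (Idempotence of the q-antisymmetrizers and q-symmetrizers.) For every integer k ≥ 1 the operators A^{(k)} and S^{(k)} on V^{⊗k} are projectors: (A^{(k)})² = A^{(k)} and (S^{(k)})² = S^{(k)}. -/
open Finset

namespace QProjAux
open Matrix Kronecker

variable {F : Type*} [Field F] {N : ℕ}

/-- Splitting equivalence for multi-indices. -/
def es (N l r : ℕ) : (Fin (l + r) → Fin N) ≃ (Fin l → Fin N) × (Fin r → Fin N) where
  toFun a := (fun i => a (Fin.castAdd r i), fun i => a (Fin.natAdd l i))
  invFun p t := if h : t.1 < l then p.1 ⟨t.1, h⟩ else p.2 ⟨t.1 - l, by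
    have := t.isLt; omega⟩
  left_inv a := by
    funext t
    dsimp only
    by_cases h : t.1 < l
    · rw [dif_pos h]
      rfl
    · rw [dif_neg h]
      exact congrArg a (Fin.ext (by simp only [Fin.coe_natAdd]; omega))
  right_inv p := by
    refine Prod.ext (funext fun i => ?_) (funext fun i => ?_) <;> dsimp only
    · rw [dif_pos (by simpa using i.isLt)]
      rfl
    · rw [dif_neg (by simp)]
      exact congrArg p.2 (Fin.ext (by simp))

/-- Tensor product of operators, as an operator on the concatenated legs. -/
def tens {l r : ℕ} (A : TensM F N l) (B : TensM F N r) : TensM F N (l + r) :=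
  (A ⊗ₖ B).submatrix (es N l r) (es N l r)

lemma tens_apply {l r : ℕ} (A : TensM F N l) (B : TensM F N r)
    (a b : Fin (l + r) → Fin N) :
    tens A B a b = A (fun i => a (Fin.castAdd r i)) (fun i => b (Fin.castAdd r i)) *
      B (fun i => a (Fin.natAdd l i)) (fun i => b (Fin.natAdd l i)) := rfl

lemma tens_mul {l r : ℕ} (A A' : TensM F N l) (B B' : TensM F N r) :
    tens A B * tens A' B' = tens (A * A') (B * B') := by
  unfold tens
  rw [Matrix.submatrix_mul_equiv, Matrix.mul_kronecker_mul]

lemma tens_one (l r : ℕ) : tens (1 : TensM F N l) (1 : TensM F N r) = 1 := by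
  unfold tens
  rw [Matrix.one_kronecker_one, Matrix.submatrix_one_equiv]

lemma tens_smul_left {l r : ℕ} (c : F) (A : TensM F N l) (B : TensM F N r) :
    tens (c • A) B = c • tens A B := by
  unfold tens
  rw [Matrix.smul_kronecker]
  rfl

lemma tens_add_left {l r : ℕ} (A A' : TensM F N l) (B : TensM F N r) :
    tens (A + A') B = tens A B + tens A' B := by
  unfold tens
  rw [Matrix.add_kronecker]
  rfl

lemma tens_smul_right {l r : ℕ} (c : F) (A : TensM F N l) (B : TensM F N r) :
    tens A (c • B) = c • tens A B := by
  unfold tens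
  rw [Matrix.kronecker_smul]
  rfl

lemma tens_add_right {l r : ℕ} (A : TensM F N l) (B B' : TensM F N r) :
    tens A (B + B') = tens A B + tens A B' := by
  unfold tens
  rw [Matrix.kronecker_add]
  rfl

lemma tens_sub_left {l r : ℕ} (A A' : TensM F N l) (B : TensM F N r) :
    tens (A - A') B = tens A B - tens A' B := by
  rw [sub_eq_add_neg, ← neg_one_smul F A', tens_add_left, tens_smul_left,
    neg_one_smul, ← sub_eq_add_neg]


lemma tens_sub_right {l r : ℕ} (A : TensM F N l) (B B' : TensM F N r) :
    tens A (B - B') = tens A B - tens A B' := by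
  rw [sub_eq_add_neg, ← neg_one_smul F B', tens_add_right, tens_smul_right,
    neg_one_smul, ← sub_eq_add_neg]


lemma embed_self {k : ℕ} (M : TensM F N k) : embed k M = M := by
  funext a b
  show (Matrix.of _ : TensM F N k) a b = M a b
  simp only [embed, Matrix.of_apply, dif_pos le_rfl]
  rw [if_pos (fun t ht => absurd t.isLt (by omega))]

lemma embed_tens {k l r : ℕ} (hk : k ≤ l) (M : TensM F N k) :
    (embed (l + r) M : TensM F N (l + r)) = tens (embed l M) (1 : TensM F N r) := by
  funext a b
  rw [tens_apply]
  simp only [embed, Matrix.of_apply, dif_pos (show k ≤ l + r by omega), dif_pos hk]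
  by_cases hc : ∀ t : Fin (l + r), k ≤ t.1 → a t = b t
  · have hv : (fun i => a (Fin.natAdd l i)) = fun i => b (Fin.natAdd l i) :=
      funext fun i => hc (Fin.natAdd l i) (by simp only [Fin.coe_natAdd]; omega)
    rw [if_pos hc, if_pos fun t ht => hc (Fin.castAdd r t) (by simpa using ht), hv,
      Matrix.one_apply_eq, mul_one]
    rfl
  · rw [if_neg hc]
    push_neg at hc
    obtain ⟨t, htk, hab⟩ := hc
    by_cases htl : t.1 < l
    · rw [if_neg, zero_mul]
      intro hco
      exact hab (hco ⟨t.1, htl⟩ htk)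
    · rw [Matrix.one_apply_ne, mul_zero]
      intro he
      apply hab
      have := congrFun he ⟨t.1 - l, by have := t.isLt; omega⟩
      simpa [Fin.natAdd, Fin.ext_iff, show l + (t.1 - l) = t.1 by omega] using this

lemma place2_tens_left {l r p : ℕ} (hp : p + 2 ≤ l) (X : RMat F N) :
    (place2 p X : TensM F N (l + r)) = tens (place2 p X : TensM F N l) (1 : TensM F N r) := by
  funext a b
  rw [tens_apply]
  simp only [place2, Matrix.of_apply, dif_pos (show p + 1 < l + r by omega),
    dif_pos (show p + 1 < l by omega)]
  by_cases hc : ∀ t : Fin (l + r), t.1 ≠ p → t.1 ≠ p + 1 → a t = b t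
  · have hv : (fun i => a (Fin.natAdd l i)) = fun i => b (Fin.natAdd l i) :=
      funext fun i => hc (Fin.natAdd l i) (by simp only [Fin.coe_natAdd]; omega)
        (by simp only [Fin.coe_natAdd]; omega)
    rw [if_pos hc, if_pos fun t ht1 ht2 =>
      hc (Fin.castAdd r t) (by simpa using ht1) (by simpa using ht2), hv,
      Matrix.one_apply_eq, mul_one]
    rfl
  · rw [if_neg hc]
    push_neg at hc
    obtain ⟨t, ht1, ht2, hab⟩ := hc
    by_cases htl : t.1 < l
    · rw [if_neg, zero_mul]
      intro hco
      exact hab (hco ⟨t.1, htl⟩ ht1 ht2)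
    · rw [Matrix.one_apply_ne, mul_zero]
      intro he
      apply hab
      have := congrFun he ⟨t.1 - l, by have := t.isLt; omega⟩
      simpa [Fin.natAdd, Fin.ext_iff, show l + (t.1 - l) = t.1 by omega] using this

lemma place2_tens_right {l r i p : ℕ} (hi : i + 2 ≤ r) (hp : p = l + i) (X : RMat F N) :
    (place2 p X : TensM F N (l + r)) = tens (1 : TensM F N l) (place2 i X : TensM F N r) := by
  subst hp
  funext a b
  rw [tens_apply]
  simp only [place2, Matrix.of_apply, dif_pos (show l + i + 1 < l + r by omega),
    dif_pos (show i + 1 < r by omega)]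
  by_cases hc : ∀ t : Fin (l + r), t.1 ≠ l + i → t.1 ≠ l + i + 1 → a t = b t
  · have hv : (fun t => a (Fin.castAdd r t)) = fun t => b (Fin.castAdd r t) :=
      funext fun t => hc (Fin.castAdd r t)
        (by have := t.isLt; simp only [Fin.coe_castAdd]; omega)
        (by have := t.isLt; simp only [Fin.coe_castAdd]; omega)
    rw [if_pos hc, if_pos fun s hs1 hs2 => hc (Fin.natAdd l s)
      (by simp only [Fin.coe_natAdd]; omega) (by simp only [Fin.coe_natAdd]; omega), hv,
      Matrix.one_apply_eq, one_mul]
    rfl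
  · rw [if_neg hc]
    push_neg at hc
    obtain ⟨t, ht1, ht2, hab⟩ := hc
    by_cases htl : t.1 < l
    · rw [Matrix.one_apply_ne, zero_mul]
      intro he
      apply hab
      have := congrFun he ⟨t.1, htl⟩
      simpa using this
    · rw [if_neg, mul_zero]
      intro hco
      apply hab
      have := hco ⟨t.1 - l, by have := t.isLt; omega⟩ (by simp; omega) (by simp; omega)
      simpa [Fin.natAdd, Fin.ext_iff, show l + (t.1 - l) = t.1 by omega] using this

lemma place2_two (X : RMat F N) :
    (place2 0 X : TensM F N 2) =
      X.submatrix (finTwoArrowEquiv (Fin N)) (finTwoArrowEquiv (Fin N)) := by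
  funext a b
  simp only [place2, Matrix.of_apply, dif_pos (show (0:ℕ) + 1 < 2 by norm_num)]
  rw [if_pos]
  · rfl
  · intro t ht0 ht1
    have := t.isLt
    omega

lemma embed_mul {k m : ℕ} (h : k ≤ m) (M M' : TensM F N k) :
    embed m (M * M') = (embed m M : TensM F N m) * embed m M' := by
  obtain ⟨r, rfl⟩ : ∃ r, m = k + r := ⟨m - k, by omega⟩
  rw [embed_tens le_rfl (M * M'), embed_tens le_rfl M, embed_tens le_rfl M',
    embed_self, embed_self, embed_self, tens_mul, one_mul]

lemma embed_smul {k m : ℕ} (h : k ≤ m) (c : F) (M : TensM F N k) :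
    embed m (c • M) = c • (embed m M : TensM F N m) := by
  obtain ⟨r, rfl⟩ : ∃ r, m = k + r := ⟨m - k, by omega⟩
  rw [embed_tens le_rfl, embed_tens le_rfl, embed_self, embed_self, tens_smul_left]

lemma embed_sub {k m : ℕ} (h : k ≤ m) (M M' : TensM F N k) :
    embed m (M - M') = (embed m M : TensM F N m) - embed m M' := by
  obtain ⟨r, rfl⟩ : ∃ r, m = k + r := ⟨m - k, by omega⟩
  rw [embed_tens le_rfl, embed_tens le_rfl, embed_tens le_rfl,
    embed_self, embed_self, embed_self, tens_sub_left]

lemma embed_add {k m : ℕ} (h : k ≤ m) (M M' : TensM F N k) :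
    embed m (M + M') = (embed m M : TensM F N m) + embed m M' := by
  obtain ⟨r, rfl⟩ : ∃ r, m = k + r := ⟨m - k, by omega⟩
  rw [embed_tens le_rfl, embed_tens le_rfl, embed_tens le_rfl,
    embed_self, embed_self, embed_self, tens_add_left]

lemma embed_one {k m : ℕ} (h : k ≤ m) :
    embed m (1 : TensM F N k) = (1 : TensM F N m) := by
  obtain ⟨r, rfl⟩ : ∃ r, m = k + r := ⟨m - k, by omega⟩
  rw [embed_tens le_rfl, embed_self, tens_one]

lemma embed_embed {k l m : ℕ} (h1 : k ≤ l) (h2 : l ≤ m) (M : TensM F N k) :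
    embed m (embed l M : TensM F N l) = embed m M := by
  obtain ⟨r, rfl⟩ : ∃ r, m = l + r := ⟨m - l, by omega⟩
  rw [embed_tens le_rfl, embed_self, ← embed_tens h1]

lemma embed_place2 {p k m : ℕ} (h1 : p + 2 ≤ k) (h2 : k ≤ m) (X : RMat F N) :
    embed m (place2 p X : TensM F N k) = (place2 p X : TensM F N m) := by
  obtain ⟨r, rfl⟩ : ∃ r, m = k + r := ⟨m - k, by omega⟩
  rw [embed_tens le_rfl, embed_self, ← place2_tens_left h1]

lemma place2_mul_top {p : ℕ} (X Y : RMat F N) :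
    (place2 p X : TensM F N (p + 2)) * place2 p Y = place2 p (X * Y) := by
  rw [place2_tens_right (l:=p) (r:=2) (i:=0) (by norm_num) (Nat.add_zero p).symm X,
    place2_tens_right (l:=p) (r:=2) (i:=0) (by norm_num) (Nat.add_zero p).symm Y,
    tens_mul, one_mul, place2_two, place2_two, Matrix.submatrix_mul_equiv,
    ← place2_two, ← place2_tens_right (l:=p) (r:=2) (i:=0) (by norm_num)
      (Nat.add_zero p).symm (X * Y)]

lemma place2_mul_same {p m : ℕ} (h : p + 2 ≤ m) (X Y : RMat F N) :
    (place2 p X : TensM F N m) * place2 p Y = place2 p (X * Y) := by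
  obtain ⟨r, rfl⟩ : ∃ r, m = (p + 2) + r := ⟨m - (p + 2), by omega⟩
  rw [place2_tens_left le_rfl X, place2_tens_left le_rfl Y, tens_mul, one_mul,
    place2_mul_top, ← place2_tens_left le_rfl]

lemma place2_one {p m : ℕ} (h : p + 2 ≤ m) :
    (place2 p (1 : RMat F N) : TensM F N m) = 1 := by
  obtain ⟨r, rfl⟩ : ∃ r, m = (p + 2) + r := ⟨m - (p + 2), by omega⟩
  rw [place2_tens_left le_rfl,
    place2_tens_right (l:=p) (r:=2) (i:=0) (by norm_num) (Nat.add_zero p).symm,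
    place2_two, Matrix.submatrix_one_equiv, tens_one, tens_one]

lemma place2_add {p m : ℕ} (X Y : RMat F N) :
    (place2 p (X + Y) : TensM F N m) = place2 p X + place2 p Y := by
  funext a b
  simp only [place2, Matrix.of_apply, Matrix.add_apply]
  split_ifs <;> simp [Matrix.add_apply]

lemma place2_smul {p m : ℕ} (c : F) (X : RMat F N) :
    (place2 p (c • X) : TensM F N m) = c • place2 p X := by
  funext a b
  simp only [place2, Matrix.of_apply, Matrix.smul_apply]
  split_ifs <;> simp [Matrix.smul_apply]

lemma comm_top {k p : ℕ} (hk : k ≤ p) (M : TensM F N k) (X : RMat F N) :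
    embed (p + 2) M * place2 p X = place2 p X * embed (p + 2) M := by
  rw [embed_tens (l:=p) (r:=2) hk M,
    place2_tens_right (l:=p) (r:=2) (i:=0) (by norm_num) (Nat.add_zero p).symm X,
    tens_mul, tens_mul]
  simp only [one_mul, mul_one]

lemma place2_comm_embed {k p m : ℕ} (hk : k ≤ p) (hm : p + 2 ≤ m)
    (M : TensM F N k) (X : RMat F N) :
    embed m M * place2 p X = place2 p X * embed m M := by
  obtain ⟨r, rfl⟩ : ∃ r, m = (p + 2) + r := ⟨m - (p + 2), by omega⟩
  rw [embed_tens (l:=p+2) (r:=r) (by omega) M, place2_tens_left le_rfl X,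
    tens_mul, tens_mul, comm_top hk]

lemma yb_top {p : ℕ} {Rh : RMat F N} (hYB : YangBaxter Rh) :
    (place2 p Rh : TensM F N (p + 3)) * place2 (p + 1) Rh * place2 p Rh =
      place2 (p + 1) Rh * place2 p Rh * place2 (p + 1) Rh := by
  rw [place2_tens_right (l:=p) (r:=3) (i:=0) (by norm_num) (Nat.add_zero p).symm Rh,
    place2_tens_right (l:=p) (r:=3) (i:=1) (by norm_num) rfl Rh,
    tens_mul, tens_mul, tens_mul, tens_mul]
  simp only [one_mul]
  rw [show (place2 0 Rh : TensM F N 3) * place2 1 Rh * place2 0 Rh =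
    place2 1 Rh * place2 0 Rh * place2 1 Rh from hYB]

lemma yb_shift {p m : ℕ} {Rh : RMat F N} (h : p + 3 ≤ m) (hYB : YangBaxter Rh) :
    (place2 p Rh : TensM F N m) * place2 (p + 1) Rh * place2 p Rh =
      place2 (p + 1) Rh * place2 p Rh * place2 (p + 1) Rh := by
  obtain ⟨r, rfl⟩ : ∃ r, m = (p + 3) + r := ⟨m - (p + 3), by omega⟩
  rw [place2_tens_left (l:=p+3) (show p + 2 ≤ p + 3 by omega) Rh,
    place2_tens_left (l:=p+3) (show (p + 1) + 2 ≤ p + 3 from le_rfl) Rh,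
    tens_mul, tens_mul, tens_mul, tens_mul, yb_top hYB]

lemma hecke_shift {p m : ℕ} {q : F} {Rh : RMat F N} (h : p + 2 ≤ m) (hH : Hecke q Rh) :
    (place2 p Rh : TensM F N m) * place2 p Rh = 1 + (q - q⁻¹) • place2 p Rh := by
  rw [place2_mul_same h, show Rh * Rh = 1 + (q - q⁻¹) • Rh from hH, place2_add,
    place2_smul, place2_one h]

private lemma core {F : Type*} [Field F] {G : Type*} [Ring G] [Algebra F G]
    (t d α α' η η' γ δ : F) (a a' r r' : G)
    (hγ : γ ≠ 0) (hη' : η' ≠ 0) (hδ : δ ≠ 0)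
    (haa : a * a = a) (ha' : a' * a' = a')
    (hrec : γ • a = a' * (α • (1:G) + η' • r') * a')
    (habs : a * r' = t • a)
    (hcomm : a' * r = r * a')
    (hH : r * r = 1 + d • r)
    (hYB : r * (r' * r) = r' * (r * r'))
    (hs1 : η * α = t * (α' * γ))
    (hs2 : α' * γ + η * (α * (d - t)) = 0)
    (hδe : δ = α' + t * η) :
    (δ⁻¹ • (a * (α' • (1:G) + η • r) * a)) * r = t • (δ⁻¹ • (a * (α' • (1:G) + η • r) * a)) ∧
    (δ⁻¹ • (a * (α' • (1:G) + η • r) * a)) * (δ⁻¹ • (a * (α' • (1:G) + η • r) * a)) =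
      δ⁻¹ • (a * (α' • (1:G) + η • r) * a) := by
  have haa' : a * a' = a := by
    have h1 : γ • (a * a') = γ • a := by
      rw [← smul_mul_assoc, hrec, mul_assoc (a' * (α • (1:G) + η' • r')), ha']
    have h2 := congrArg (fun z => γ⁻¹ • z) h1
    simpa [inv_smul_smul₀ hγ] using h2
  have e1 : a * r * a' = a * r := by
    rw [mul_assoc, ← hcomm, ← mul_assoc, haa']
  have hCa : a' * (α • (1:G) + η' • r') * a' = α • a' + η' • (a' * r' * a') := by
    simp only [mul_add, add_mul, mul_smul_comm, smul_mul_assoc, mul_one, ha']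
  have hra : η' • (a' * r' * a') = γ • a - α • a' := by
    rw [hrec, hCa]; abel
  have hra' : a' * r' * a' = η'⁻¹ • (γ • a - α • a') := by
    rw [← hra, inv_smul_smul₀ hη']
  have e2 : a * r * r' * a' = η'⁻¹ • (γ • (a * r * a) - α • (a * r)) := by
    have h5 : a * r * r' * a' = a * r * (a' * r' * a') := by
      conv_lhs => rw [show a * r = a * r * a' from e1.symm]
      rw [mul_assoc (a*r) a' r', mul_assoc (a*r) (a'*r') a']
    rw [h5, hra', mul_smul_comm, mul_sub, mul_smul_comm, mul_smul_comm, e1]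
  have e3 : γ • (a*r*(a*r)) = α • a + (α*d - α*t) • (a*r) + (t*γ) • (a*r*a) := by
    have hrr : (a*r)*(r*a') = a + d • (a*r) := by
      rw [← mul_assoc, mul_assoc a r r, hH, mul_add, mul_one, mul_smul_comm,
        add_mul, smul_mul_assoc, haa', e1]
    have hYb : (a*r*r')*r = t • (a*r*r') := by
      rw [mul_assoc a r r', mul_assoc a (r*r') r, mul_assoc r r' r, hYB,
        ← mul_assoc a r' (r*r'), habs, smul_mul_assoc, ← mul_assoc]
    calc γ • (a*r*(a*r))
        = a*r*((γ • a)*r) := by rw [smul_mul_assoc, mul_smul_comm]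
      _ = a*r*((a' * (α • (1:G) + η' • r') * a')*r) := by rw [hrec]
      _ = (a*r*(α • (1:G) + η' • r'))*(r*a') := by
          rw [mul_assoc (a' * (α • (1:G) + η' • r')) a' r, hcomm,
            ← mul_assoc (a*r) (a' * (α • (1:G) + η' • r')) (r*a'),
            ← mul_assoc (a*r) a' (α • (1:G) + η' • r'), e1]
      _ = α • ((a*r)*(r*a')) + η' • ((a*r*r')*(r*a')) := by
          simp only [mul_add, add_mul, mul_smul_comm, smul_mul_assoc, mul_one]
      _ = α • (a + d•(a*r)) + η' • ((t • (a*r*r'))*a') := by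
          rw [hrr, ← mul_assoc (a*r*r') r a', hYb]
      _ = α • a + (α*d - α*t) • (a*r) + (t*γ) • (a*r*a) := by
          rw [smul_mul_assoc, e2]
          match_scalars <;> field_simp <;> ring
  set X := a * (α' • (1:G) + η • r) * a with hX
  have hBa : X = α' • a + η • (a*r*a) := by
    rw [hX]; simp only [mul_add, add_mul, mul_smul_comm, smul_mul_assoc, mul_one, haa]
  have harar : a*r*(a*r) = γ⁻¹ • (α • a + (α*d - α*t) • (a*r) + (t*γ) • (a*r*a)) := by
    rw [← e3, inv_smul_smul₀ hγ]
  have hXr : X * r = t • X := by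
    rw [hBa, add_mul, smul_mul_assoc, smul_mul_assoc, mul_assoc (a*r) a r, harar]
    match_scalars
    · field_simp
      linear_combination hs2
    · field_simp
      linear_combination hs1
    · field_simp
  have hXa : X * a = X := by
    rw [hX, mul_assoc (a * (α' • (1:G) + η • r)) a a, haa]
  have h7 : X * (a*r*a) = t • X := by
    rw [← mul_assoc X (a*r) a, ← mul_assoc X a r, hXa, hXr, smul_mul_assoc, hXa]
  have hXX : X * X = δ • X := by
    nth_rewrite 2 [hBa]
    rw [mul_add, mul_smul_comm, mul_smul_comm, hXa, h7, smul_smul, hδe]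
    match_scalars
    ring
  constructor
  · rw [smul_mul_assoc, hXr, smul_comm]
  · rw [smul_mul_assoc, mul_smul_comm, smul_smul, hXX, smul_smul]
    match_scalars
    field_simp



section Main
variable {F : Type*} [Field F] {N : ℕ} {q : F} {Rh : RMat F N}

lemma qd_ne (hqnum : ∀ k : ℕ, 1 ≤ k → qnum q k ≠ 0) : q - q⁻¹ ≠ 0 := by
  intro h
  exact hqnum 1 le_rfl (by simp [qnum, h])

lemma qnum_one (hqnum : ∀ k : ℕ, 1 ≤ k → qnum q k ≠ 0) : qnum q 1 = 1 := by
  have hd := qd_ne hqnum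
  rw [qnum, pow_one, pow_one, div_self hd]

lemma qnum_succ (hq : q ≠ 0) (hqnum : ∀ k : ℕ, 1 ≤ k → qnum q k ≠ 0) (k : ℕ) :
    qnum q (k + 1) = q ^ k + q⁻¹ * qnum q k := by
  have hd := qd_ne hqnum
  rw [qnum, qnum, div_eq_iff hd, add_mul, mul_assoc, div_mul_cancel₀ _ hd]
  ring

lemma qnum_succ' (hq : q ≠ 0) (hqnum : ∀ k : ℕ, 1 ≤ k → qnum q k ≠ 0) (k : ℕ) :
    qnum q (k + 1) = q⁻¹ ^ k + q * qnum q k := by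
  have hd := qd_ne hqnum
  rw [qnum, qnum, div_eq_iff hd, add_mul, mul_assoc, div_mul_cancel₀ _ hd]
  ring

/-- The inductive invariant: both projectors are idempotent and absorb each braid
generator appearing in them, with eigenvalue `-q⁻¹` resp. `q`. -/
def GoodP (Rh : RMat F N) (q : F) (k : ℕ) : Prop :=
  (antis Rh q k * antis Rh q k = antis Rh q k) ∧
  (syms Rh q k * syms Rh q k = syms Rh q k) ∧
  (∀ i, i + 2 ≤ k → antis Rh q k * place2 i Rh = (-q⁻¹) • antis Rh q k) ∧
  (∀ i, i + 2 ≤ k → syms Rh q k * place2 i Rh = q • syms Rh q k)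

lemma good_one : GoodP Rh q 1 := by
  refine ⟨?_, ?_, fun i hi => by omega, fun i hi => by omega⟩
  · rw [show antis Rh q 1 = 1 from rfl, one_mul]
  · rw [show syms Rh q 1 = 1 from rfl, one_mul]

lemma good_two (hq : q ≠ 0) (hqnum : ∀ k : ℕ, 1 ≤ k → qnum q k ≠ 0)
    (hH : Hecke q Rh) : GoodP Rh q 2 := by
  have hd := qd_ne hqnum
  have h2 : qnum q 2 = q + q⁻¹ := by
    rw [qnum_succ hq hqnum 1, qnum_one hqnum, pow_one, mul_one]
  have h2ne : q + q⁻¹ ≠ 0 := h2 ▸ hqnum 2 (by omega)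
  have h1q2 : 1 + q ^ 2 ≠ 0 := by
    intro h
    apply h2ne
    have key : q + q⁻¹ = (1 + q ^ 2) / q := by
      field_simp
      ring
    rw [key, h, zero_div]
  have hqq3 : q + q ^ 3 ≠ 0 := by
    have h : q + q ^ 3 = q * (1 + q ^ 2) := by ring
    rw [h]
    exact mul_ne_zero hq h1q2
  have hP : (place2 0 Rh : TensM F N 2) * place2 0 Rh = 1 + (q - q⁻¹) • place2 0 Rh :=
    hecke_shift (by omega) hH
  have hA2 : antis Rh q 2 = (q + q⁻¹)⁻¹ • (q • (1 : TensM F N 2) - place2 0 Rh) := by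
    show (qnum q 2)⁻¹ • (embed 2 (antis Rh q 1) *
      (q ^ 1 • (1 : TensM F N 2) - qnum q 1 • place2 0 Rh) * embed 2 (antis Rh q 1)) = _
    rw [show antis Rh q 1 = (1 : TensM F N 1) from rfl, embed_one (by omega), one_mul,
      mul_one, qnum_one hqnum, one_smul, pow_one, h2]
  have hS2 : syms Rh q 2 = (q + q⁻¹)⁻¹ • (q⁻¹ • (1 : TensM F N 2) + place2 0 Rh) := by
    show (qnum q 2)⁻¹ • (embed 2 (syms Rh q 1) *
      (q⁻¹ ^ 1 • (1 : TensM F N 2) + qnum q 1 • place2 0 Rh) * embed 2 (syms Rh q 1)) = _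
    rw [show syms Rh q 1 = (1 : TensM F N 1) from rfl, embed_one (by omega), one_mul,
      mul_one, qnum_one hqnum, one_smul, pow_one, h2]
  have hXX : (q • (1 : TensM F N 2) - place2 0 Rh) * (q • (1 : TensM F N 2) - place2 0 Rh)
      = (q + q⁻¹) • (q • (1 : TensM F N 2) - place2 0 Rh) := by
    simp only [smul_mul_assoc, mul_smul_comm, smul_smul, sub_mul, mul_sub, one_mul, mul_one]
    rw [hP]
    match_scalars <;> field_simp <;> ring
  have hXP : (q • (1 : TensM F N 2) - place2 0 Rh) * place2 0 Rh
      = (-q⁻¹) • (q • (1 : TensM F N 2) - place2 0 Rh) := by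
    simp only [smul_mul_assoc, sub_mul, one_mul]
    rw [hP]
    match_scalars <;> field_simp <;> ring
  have hYY : (q⁻¹ • (1 : TensM F N 2) + place2 0 Rh) * (q⁻¹ • (1 : TensM F N 2) + place2 0 Rh)
      = (q + q⁻¹) • (q⁻¹ • (1 : TensM F N 2) + place2 0 Rh) := by
    simp only [smul_mul_assoc, mul_smul_comm, smul_smul, add_mul, mul_add, one_mul, mul_one]
    rw [hP]
    match_scalars <;> field_simp <;> ring
  have hYP : (q⁻¹ • (1 : TensM F N 2) + place2 0 Rh) * place2 0 Rh
      = q • (q⁻¹ • (1 : TensM F N 2) + place2 0 Rh) := by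
    simp only [smul_mul_assoc, add_mul, one_mul]
    rw [hP]
    match_scalars <;> field_simp <;> ring
  refine ⟨?_, ?_, fun i hi => ?_, fun i hi => ?_⟩
  · rw [hA2, smul_mul_assoc, mul_smul_comm, smul_smul, hXX, smul_smul]
    have hc : (q + q⁻¹) * (q + q⁻¹)⁻¹ = 1 := mul_inv_cancel₀ h2ne
    match_scalars
    · linear_combination ((q + q⁻¹)⁻¹ * q) * hc
    · linear_combination (-(q + q⁻¹)⁻¹) * hc
  · rw [hS2, smul_mul_assoc, mul_smul_comm, smul_smul, hYY, smul_smul]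
    have hc : (q + q⁻¹) * (q + q⁻¹)⁻¹ = 1 := mul_inv_cancel₀ h2ne
    match_scalars
    · linear_combination ((q + q⁻¹)⁻¹ * q⁻¹) * hc
    · linear_combination ((q + q⁻¹)⁻¹) * hc
  · obtain rfl : i = 0 := by omega
    rw [hA2, smul_mul_assoc, hXP, smul_comm]
  · obtain rfl : i = 0 := by omega
    rw [hS2, smul_mul_assoc, hYP, smul_comm]

lemma good_step (hq : q ≠ 0) (hqnum : ∀ k : ℕ, 1 ≤ k → qnum q k ≠ 0)
    (hYB : YangBaxter Rh) (hH : Hecke q Rh) (j : ℕ)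
    (h1 : GoodP Rh q (j + 1)) (h2 : GoodP Rh q (j + 2)) : GoodP Rh q (j + 3) := by
  have hβ := hqnum (j + 1) (by omega)
  have hγ := hqnum (j + 2) (by omega)
  have hδ := hqnum (j + 3) (by omega)
  -- transported facts
  have hHm : (place2 (j+1) Rh : TensM F N (j+3)) * place2 (j+1) Rh =
      1 + (q - q⁻¹) • place2 (j+1) Rh := hecke_shift (by omega) hH
  have hYBm : (place2 (j+1) Rh : TensM F N (j+3)) *
      ((place2 j Rh : TensM F N (j+3)) * place2 (j+1) Rh) =
      (place2 j Rh : TensM F N (j+3)) *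
      ((place2 (j+1) Rh : TensM F N (j+3)) * place2 j Rh) := by
    have h := yb_shift (p := j) (m := j+3) (by omega) hYB
    rw [← mul_assoc, ← mul_assoc]
    exact h.symm
  -- antisymmetrizer side
  have hAA : embed (j+3) (antis Rh q (j+2)) * embed (j+3) (antis Rh q (j+2)) =
      embed (j+3) (antis Rh q (j+2)) := by
    rw [← embed_mul (by omega), h2.1]
  have hA'A' : embed (j+3) (antis Rh q (j+1)) * embed (j+3) (antis Rh q (j+1)) =
      embed (j+3) (antis Rh q (j+1)) := by
    rw [← embed_mul (by omega), h1.1]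
  have hrecm : antis Rh q (j+2) = (qnum q (j+2))⁻¹ •
      (embed (j+2) (antis Rh q (j+1)) *
        (q ^ (j+1) • (1 : TensM F N (j+2)) - qnum q (j+1) • place2 j Rh) *
        embed (j+2) (antis Rh q (j+1))) := rfl
  have hrecA : qnum q (j+2) • embed (j+3) (antis Rh q (j+2)) =
      embed (j+3) (antis Rh q (j+1)) *
        ((q ^ (j+1)) • (1 : TensM F N (j+3)) + (-(qnum q (j+1))) • place2 j Rh) *
        embed (j+3) (antis Rh q (j+1)) := by
    rw [hrecm, embed_smul (by omega), embed_mul (by omega), embed_mul (by omega),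
      embed_sub (by omega), embed_smul (by omega), embed_smul (by omega),
      embed_one (by omega), embed_place2 (by omega) (by omega),
      embed_embed (by omega) (by omega), smul_smul, mul_inv_cancel₀ hγ, one_smul,
      neg_smul, ← sub_eq_add_neg]
  have habsA : embed (j+3) (antis Rh q (j+2)) * place2 j Rh =
      (-q⁻¹) • embed (j+3) (antis Rh q (j+2)) := by
    rw [← embed_place2 (le_refl (j+2)) (by omega), ← embed_mul (by omega),
      h2.2.2.1 j (by omega), embed_smul (by omega)]
  have hcommA : embed (j+3) (antis Rh q (j+1)) * place2 (j+1) Rh =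
      place2 (j+1) Rh * embed (j+3) (antis Rh q (j+1)) :=
    place2_comm_embed (le_refl (j+1)) (by omega) _ _
  have hs1A : (-(qnum q (j+2))) * (q ^ (j+1)) =
      (-q⁻¹) * ((q ^ (j+2)) * (qnum q (j+2))) := by
    field_simp
    ring
  have hs2A : (q ^ (j+2)) * (qnum q (j+2)) +
      (-(qnum q (j+2))) * ((q ^ (j+1)) * ((q - q⁻¹) - (-q⁻¹))) = 0 := by
    have h : (q - q⁻¹) - (-q⁻¹) = q := by ring
    rw [h, pow_succ]
    ring
  have hδeA : qnum q (j+3) = q ^ (j+2) + (-q⁻¹) * (-(qnum q (j+2))) := by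
    have h : qnum q (j+3) = q ^ (j+2) + q⁻¹ * qnum q (j+2) := qnum_succ hq hqnum (j+2)
    rw [h]; ring
  obtain ⟨c1A, c2A⟩ := core (-q⁻¹) (q - q⁻¹) (q ^ (j+1)) (q ^ (j+2)) (-(qnum q (j+2)))
    (-(qnum q (j+1))) (qnum q (j+2)) (qnum q (j+3))
    (embed (j+3) (antis Rh q (j+2))) (embed (j+3) (antis Rh q (j+1)))
    (place2 (j+1) Rh) (place2 j Rh) hγ (neg_ne_zero.mpr hβ) hδ hAA hA'A' hrecA habsA
    hcommA hHm hYBm hs1A hs2A hδeA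
  have hAnext : antis Rh q (j+3) = (qnum q (j+3))⁻¹ •
      (embed (j+3) (antis Rh q (j+2)) *
        ((q ^ (j+2)) • (1 : TensM F N (j+3)) + (-(qnum q (j+2))) • place2 (j+1) Rh) *
        embed (j+3) (antis Rh q (j+2))) := by
    rw [neg_smul, ← sub_eq_add_neg]; rfl
  -- symmetrizer side
  have hSS : embed (j+3) (syms Rh q (j+2)) * embed (j+3) (syms Rh q (j+2)) =
      embed (j+3) (syms Rh q (j+2)) := by
    rw [← embed_mul (by omega), h2.2.1]
  have hS'S' : embed (j+3) (syms Rh q (j+1)) * embed (j+3) (syms Rh q (j+1)) =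
      embed (j+3) (syms Rh q (j+1)) := by
    rw [← embed_mul (by omega), h1.2.1]
  have hrecmS : syms Rh q (j+2) = (qnum q (j+2))⁻¹ •
      (embed (j+2) (syms Rh q (j+1)) *
        (q⁻¹ ^ (j+1) • (1 : TensM F N (j+2)) + qnum q (j+1) • place2 j Rh) *
        embed (j+2) (syms Rh q (j+1))) := rfl
  have hrecS : qnum q (j+2) • embed (j+3) (syms Rh q (j+2)) =
      embed (j+3) (syms Rh q (j+1)) *
        ((q⁻¹ ^ (j+1)) • (1 : TensM F N (j+3)) + (qnum q (j+1)) • place2 j Rh) *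
        embed (j+3) (syms Rh q (j+1)) := by
    rw [hrecmS, embed_smul (by omega), embed_mul (by omega), embed_mul (by omega),
      embed_add (by omega), embed_smul (by omega), embed_smul (by omega),
      embed_one (by omega), embed_place2 (by omega) (by omega),
      embed_embed (by omega) (by omega), smul_smul, mul_inv_cancel₀ hγ, one_smul]
  have habsS : embed (j+3) (syms Rh q (j+2)) * place2 j Rh =
      q • embed (j+3) (syms Rh q (j+2)) := by
    rw [← embed_place2 (le_refl (j+2)) (by omega), ← embed_mul (by omega),
      h2.2.2.2 j (by omega), embed_smul (by omega)]
  have hcommS : embed (j+3) (syms Rh q (j+1)) * place2 (j+1) Rh =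
      place2 (j+1) Rh * embed (j+3) (syms Rh q (j+1)) :=
    place2_comm_embed (le_refl (j+1)) (by omega) _ _
  have hs1S : (qnum q (j+2)) * (q⁻¹ ^ (j+1)) =
      q * ((q⁻¹ ^ (j+2)) * (qnum q (j+2))) := by
    have hqi : q * q⁻¹ = 1 := mul_inv_cancel₀ hq
    linear_combination (-(qnum q (j+2) * q⁻¹ ^ (j+1))) * hqi
  have hs2S : (q⁻¹ ^ (j+2)) * (qnum q (j+2)) +
      (qnum q (j+2)) * ((q⁻¹ ^ (j+1)) * ((q - q⁻¹) - q)) = 0 := by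
    have h : (q - q⁻¹) - q = -q⁻¹ := by ring
    rw [h, pow_succ]
    ring
  have hδeS : qnum q (j+3) = q⁻¹ ^ (j+2) + q * (qnum q (j+2)) := by
    exact qnum_succ' hq hqnum (j+2)
  obtain ⟨c1S, c2S⟩ := core q (q - q⁻¹) (q⁻¹ ^ (j+1)) (q⁻¹ ^ (j+2)) (qnum q (j+2))
    (qnum q (j+1)) (qnum q (j+2)) (qnum q (j+3))
    (embed (j+3) (syms Rh q (j+2))) (embed (j+3) (syms Rh q (j+1)))
    (place2 (j+1) Rh) (place2 j Rh) hγ hβ hδ hSS hS'S' hrecS habsS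
    hcommS hHm hYBm hs1S hs2S hδeS
  have hSnext : syms Rh q (j+3) = (qnum q (j+3))⁻¹ •
      (embed (j+3) (syms Rh q (j+2)) *
        ((q⁻¹ ^ (j+2)) • (1 : TensM F N (j+3)) + (qnum q (j+2)) • place2 (j+1) Rh) *
        embed (j+3) (syms Rh q (j+2))) := rfl
  refine ⟨?_, ?_, fun i hi => ?_, fun i hi => ?_⟩
  · rw [hAnext]; exact c2A
  · rw [hSnext]; exact c2S
  · by_cases hij : i = j + 1
    · subst hij; rw [hAnext]; exact c1A
    · have hie : i + 2 ≤ j + 2 := by omega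
      have habsi : embed (j+3) (antis Rh q (j+2)) * place2 i Rh =
          (-q⁻¹) • embed (j+3) (antis Rh q (j+2)) := by
        rw [← embed_place2 hie (by omega), ← embed_mul (by omega),
          h2.2.2.1 i hie, embed_smul (by omega)]
      rw [hAnext, smul_mul_assoc, mul_assoc, habsi, mul_smul_comm, smul_comm]
  · by_cases hij : i = j + 1
    · subst hij; rw [hSnext]; exact c1S
    · have hie : i + 2 ≤ j + 2 := by omega
      have habsi : embed (j+3) (syms Rh q (j+2)) * place2 i Rh =
          q • embed (j+3) (syms Rh q (j+2)) := by
        rw [← embed_place2 hie (by omega), ← embed_mul (by omega),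
          h2.2.2.2 i hie, embed_smul (by omega)]
      rw [hSnext, smul_mul_assoc, mul_assoc, habsi, mul_smul_comm, smul_comm]

lemma good_all (hq : q ≠ 0) (hqnum : ∀ k : ℕ, 1 ≤ k → qnum q k ≠ 0)
    (hYB : YangBaxter Rh) (hH : Hecke q Rh) (j : ℕ) : GoodP Rh q (j + 1) := by
  induction j using Nat.strong_induction_on with
  | _ j ih =>
    match j with
    | 0 => exact good_one
    | 1 => exact good_two hq hqnum hH
    | (n + 2) => exact good_step hq hqnum hYB hH n (ih n (by omega)) (ih (n+1) (by omega))

end Main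

end QProjAux

theorem projectors_idempotent {F : Type*} [Field F] {N : ℕ} (hN : 1 ≤ N) (q : F) (hq : q ≠ 0)
    (hqnum : ∀ k : ℕ, 1 ≤ k → qnum q k ≠ 0)
    (Rh : RMat F N) (hRinv : IsUnit Rh.det)
    (hYB : YangBaxter Rh) (hHecke : Hecke q Rh)
    (k : ℕ) (hk1 : 1 ≤ k) :
    antis Rh q k * antis Rh q k = antis Rh q k ∧
      syms Rh q k * syms Rh q k = syms Rh q k := by
  obtain ⟨j, rfl⟩ : ∃ j, k = j + 1 := ⟨k - 1, by omega⟩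
  have hg := QProjAux.good_all hq hqnum hYB hHecke j
  exact ⟨hg.1, hg.2.1⟩
end
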